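/- arXiv:2203.00777 — 5 statements merged into one kernel-verified Lean document; each statement's English description precedes it below -/
import Mathlib

section
/- For every integer n ≥ 0 and every real y with −π/2 < y < π/2, the series ∑_{m=n+1}^∞ (C(2m,m)/4^m)·sin(y)^{2m}/(2m−1) converges and equals cos(y) · ∫_0^y (C(2n,n)/4^n)·sin(t)^{2n}·tan(t)·sec(t) dt. -/
open Real MeasureTheory

noncomputable def aperyC (m : ℕ) : ℝ := (Nat.choose (2 * m) m : ℝ) / 4 ^ m

lemma aperyC_nonneg (m : ℕ) : 0 ≤ aperyC m := by unfold aperyC; positivity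

lemma aperyC_zero : aperyC 0 = 1 := by simp [aperyC]

lemma aperyC_le_one (m : ℕ) : aperyC m ≤ 1 := by
  have h : (Nat.choose (2 * m) m : ℕ) ≤ 4 ^ m := by
    calc Nat.choose (2 * m) m ≤ ∑ i ∈ Finset.range (2 * m + 1), Nat.choose (2 * m) i :=
          Finset.single_le_sum (f := fun i => Nat.choose (2 * m) i)
            (fun i _ => Nat.zero_le _) (by simp [Finset.mem_range]; omega)
      _ = 2 ^ (2 * m) := Nat.sum_range_choose (2 * m)
      _ = 4 ^ m := by rw [pow_mul]; norm_num
  rw [aperyC, div_le_one (by positivity)]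
  exact_mod_cast h

lemma aperyC_rec (m : ℕ) :
    aperyC (m + 1) * (2 * (m : ℝ) + 2) = aperyC m * (2 * (m : ℝ) + 1) := by
  have h := Nat.succ_mul_centralBinom_succ m
  rw [Nat.centralBinom_eq_two_mul_choose, Nat.centralBinom_eq_two_mul_choose] at h
  have h2 : ((m : ℝ) + 1) * (Nat.choose (2 * (m + 1)) (m + 1) : ℝ)
      = 2 * (2 * (m : ℝ) + 1) * (Nat.choose (2 * m) m : ℝ) := by exact_mod_cast h
  have h4 : (4 : ℝ) ^ (m + 1) ≠ 0 := by positivity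
  have h4' : (4 : ℝ) ^ m ≠ 0 := by positivity
  rw [aperyC, aperyC, div_mul_eq_mul_div, div_mul_eq_mul_div, div_eq_div_iff h4 h4']
  rw [pow_succ]
  linear_combination (2 * (4:ℝ)^m) * h2

/-- The key telescoping identity. -/
lemma apery_key_sum (N : ℕ) (s co : ℝ) (h : s ^ 2 + co ^ 2 = 1) :
    (∑ m ∈ Finset.range (N + 1),
        aperyC m * ((2 * (m : ℝ)) * s ^ (2 * m - 1) * co) / (2 * (m : ℝ) - 1)) * co
      + (∑ m ∈ Finset.range (N + 1), aperyC m * s ^ (2 * m) / (2 * (m : ℝ) - 1)) * s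
      = -(aperyC N * s ^ (2 * N + 1)) := by
  have expand : ∀ A B x1 x2 : ℝ, (A + x1) * co + (B + x2) * s
      = (A * co + B * s) + (x1 * co + x2 * s) := by intros; ring
  induction N with
  | zero =>
    simp [Finset.sum_range_one, aperyC_zero]
  | succ N ih =>
    rw [Finset.sum_range_succ (fun m => aperyC m * ((2 * (m : ℝ)) * s ^ (2 * m - 1) * co) / (2 * (m : ℝ) - 1)) (N + 1),
      Finset.sum_range_succ (fun m => aperyC m * s ^ (2 * m) / (2 * (m : ℝ) - 1)) (N + 1)]
    have e1 : 2 * (N + 1) - 1 = 2 * N + 1 := by omega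
    have e2 : 2 * (N + 1) = 2 * N + 2 := by omega
    rw [e1, e2]
    have hco : co ^ 2 = 1 - s ^ 2 := by linarith
    have hrec := aperyC_rec N
    have hd : (2 * ((N : ℝ) + 1) - 1) ≠ 0 := by
      have : (0:ℝ) ≤ (N:ℝ) := Nat.cast_nonneg N
      intro hc; nlinarith
    push_cast
    rw [expand, ih]
    field_simp
    linear_combination (aperyC (N+1) * (2*(N:ℝ)+2) * s^(2*N+1)) * hco + (s^(2*N+1)) * hrec
lemma hasDerivAt_F (N : ℕ) {t : ℝ} (ht : Real.cos t ≠ 0) :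
    HasDerivAt (fun u => -1 -
        (∑ m ∈ Finset.range (N + 1), aperyC m * Real.sin u ^ (2 * m) / (2 * (m : ℝ) - 1)) /
          Real.cos u)
      (aperyC N * Real.sin t ^ (2 * N + 1) / Real.cos t ^ 2) t := by
  have hsum : HasDerivAt
      (fun u => ∑ m ∈ Finset.range (N + 1), aperyC m * Real.sin u ^ (2 * m) / (2 * (m : ℝ) - 1))
      (∑ m ∈ Finset.range (N + 1),
        aperyC m * (((2 * m : ℕ) : ℝ) * Real.sin t ^ (2 * m - 1) * Real.cos t) / (2 * (m : ℝ) - 1)) t :=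
    HasDerivAt.fun_sum fun m _ =>
      ((((Real.hasDerivAt_sin t).pow (2 * m)).const_mul (aperyC m)).div_const _)
  have hsum' : HasDerivAt
      (fun u => ∑ m ∈ Finset.range (N + 1), aperyC m * Real.sin u ^ (2 * m) / (2 * (m : ℝ) - 1))
      (∑ m ∈ Finset.range (N + 1),
        aperyC m * ((2 * (m : ℝ)) * Real.sin t ^ (2 * m - 1) * Real.cos t) / (2 * (m : ℝ) - 1)) t := by
    convert hsum using 2 with m
    push_cast
    ring
  have hdiv := hsum'.div (Real.hasDerivAt_cos t) ht
  have hfin := (hasDerivAt_const t (-1 : ℝ)).sub hdiv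
  convert hfin using 1
  · rfl
  · rfl
  · rfl
  have key := apery_key_sum N (Real.sin t) (Real.cos t) (Real.sin_sq_add_cos_sq t)
  linear_combination key / (Real.cos t ^ 2)

lemma sum_at_zero (N : ℕ) :
    (∑ m ∈ Finset.range (N + 1), aperyC m * Real.sin 0 ^ (2 * m) / (2 * (m : ℝ) - 1)) = -1 := by
  rw [Finset.sum_eq_single_of_mem 0 (by simp)]
  · simp [aperyC_zero]
  · intro m _ hm
    rw [Real.sin_zero, zero_pow (by omega)]
    simp

lemma apery_integral_eq (N : ℕ) {y : ℝ} (hy : -(π / 2) < y) (hy' : y < π / 2) :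
    (∫ t in (0 : ℝ)..y, aperyC N * Real.sin t ^ (2 * N + 1) / Real.cos t ^ 2)
      = -1 - (∑ m ∈ Finset.range (N + 1),
          aperyC m * Real.sin y ^ (2 * m) / (2 * (m : ℝ) - 1)) / Real.cos y := by
  have hpi := Real.pi_pos
  have hsub : Set.uIcc (0 : ℝ) y ⊆ Set.Ioo (-(π / 2)) (π / 2) :=
    Set.ordConnected_Ioo.uIcc_subset (by constructor <;> linarith) ⟨hy, hy'⟩
  have hcos : ∀ t ∈ Set.uIcc (0 : ℝ) y, Real.cos t ≠ 0 := fun t htm =>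
    ne_of_gt (Real.cos_pos_of_mem_Ioo (hsub htm))
  have hderiv : ∀ t ∈ Set.uIcc (0 : ℝ) y,
      HasDerivAt (fun u => -1 -
        (∑ m ∈ Finset.range (N + 1), aperyC m * Real.sin u ^ (2 * m) / (2 * (m : ℝ) - 1)) /
          Real.cos u)
        (aperyC N * Real.sin t ^ (2 * N + 1) / Real.cos t ^ 2) t :=
    fun t htm => hasDerivAt_F N (hcos t htm)
  have hint : IntervalIntegrable
      (fun t => aperyC N * Real.sin t ^ (2 * N + 1) / Real.cos t ^ 2) volume 0 y := by
    apply ContinuousOn.intervalIntegrable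
    exact (continuousOn_const.mul ((Real.continuous_sin.continuousOn).pow _)).div
      ((Real.continuous_cos.continuousOn).pow 2)
      (fun t htm => pow_ne_zero 2 (hcos t htm))
  rw [intervalIntegral.integral_eq_sub_of_hasDerivAt hderiv hint]
  rw [sum_at_zero, Real.cos_zero]
  ring
lemma abs_sin_le_abs_sin {t s : ℝ} (hs : |s| ≤ π / 2) (h : |t| ≤ |s|) :
    |Real.sin t| ≤ |Real.sin s| := by
  have hpi := Real.pi_pos
  have habs : ∀ u : ℝ, |u| ≤ π → |Real.sin u| = Real.sin |u| := by
    intro u hu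
    rcases abs_cases u with ⟨h1, h2⟩ | ⟨h1, h2⟩
    · rw [h1]
      exact abs_of_nonneg (Real.sin_nonneg_of_nonneg_of_le_pi h2 (h1 ▸ hu))
    · rw [h1, abs_of_nonpos
        (Real.sin_nonpos_of_nonpos_of_neg_pi_le h2.le (abs_le.1 hu).1)]
      exact (Real.sin_neg u).symm
  rw [habs t (by linarith), habs s (by linarith)]
  exact Real.sin_le_sin_of_le_of_le_pi_div_two (by linarith [abs_nonneg t]) hs h

set_option maxHeartbeats 1000000 in
/-- For every integer `n ≥ 0` and every real `y` with `−π/2 < y < π/2`,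
the series `∑_{m=n+1}^∞ (C(2m,m)/4^m)·sin(y)^{2m}/(2m−1)` converges and equals
`cos(y) · ∫_0^y (C(2n,n)/4^n)·sin(t)^{2n}·tan(t)·sec(t) dt`. -/
theorem apery_tail_2m_minus_one (n : ℕ) (y : ℝ) (hy : -(π / 2) < y) (hy' : y < π / 2) :
    HasSum
      (fun k : ℕ =>
        (Nat.choose (2 * (n + 1 + k)) (n + 1 + k) : ℝ) / 4 ^ (n + 1 + k) *
          Real.sin y ^ (2 * (n + 1 + k)) / (2 * ((n : ℝ) + 1 + (k : ℝ)) - 1))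
      (Real.cos y *
        ∫ t in (0 : ℝ)..y,
          (Nat.choose (2 * n) n : ℝ) / 4 ^ n * Real.sin t ^ (2 * n) *
            Real.tan t * (1 / Real.cos t)) := by
  have hpi := Real.pi_pos
  have hymem : y ∈ Set.Ioo (-(π / 2)) (π / 2) := ⟨hy, hy'⟩
  have hcy : 0 < Real.cos y := Real.cos_pos_of_mem_Ioo hymem
  set f : ℕ → ℝ := fun k : ℕ =>
    (Nat.choose (2 * (n + 1 + k)) (n + 1 + k) : ℝ) / 4 ^ (n + 1 + k) *
      Real.sin y ^ (2 * (n + 1 + k)) / (2 * ((n : ℝ) + 1 + (k : ℝ)) - 1) with hf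
  set term : ℕ → ℝ := fun m => aperyC m * Real.sin y ^ (2 * m) / (2 * (m : ℝ) - 1) with hterm
  have hfeq : ∀ k : ℕ, f k = term (n + 1 + k) := by
    intro k
    rw [hf, hterm]
    simp only [aperyC]
    push_cast
    ring
  have hint : (∫ t in (0 : ℝ)..y,
        (Nat.choose (2 * n) n : ℝ) / 4 ^ n * Real.sin t ^ (2 * n) *
          Real.tan t * (1 / Real.cos t))
      = ∫ t in (0 : ℝ)..y, aperyC n * Real.sin t ^ (2 * n + 1) / Real.cos t ^ 2 := by
    apply intervalIntegral.integral_congr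
    intro t _
    simp only [aperyC, Real.tan_eq_sin_div_cos]
    rw [pow_succ]
    ring
  set I : ℕ → ℝ := fun N => ∫ t in (0 : ℝ)..y, aperyC N * Real.sin t ^ (2 * N + 1) / Real.cos t ^ 2
    with hI
  have hIS : ∀ N : ℕ, Real.cos y * I N = -Real.cos y - ∑ m ∈ Finset.range (N + 1), term m := by
    intro N
    rw [hI]
    simp only
    rw [apery_integral_eq N hy hy']
    rw [hterm]
    field_simp
  -- partial sums
  have hps : ∀ K : ℕ, (∑ k ∈ Finset.range K, f k)
      = Real.cos y * I n - Real.cos y * I (n + K) := by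
    intro K
    have h1 : ∑ m ∈ Finset.range (n + 1 + K), term m
        = (∑ m ∈ Finset.range (n + 1), term m) + ∑ k ∈ Finset.range K, term (n + 1 + k) :=
      Finset.sum_range_add term (n + 1) K
    have h3 : n + 1 + K = (n + K) + 1 := by omega
    rw [h3] at h1
    rw [hIS n, hIS (n + K)]
    calc (∑ k ∈ Finset.range K, f k)
        = ∑ k ∈ Finset.range K, term (n + 1 + k) := Finset.sum_congr rfl fun k _ => hfeq k
      _ = (∑ m ∈ Finset.range ((n + K) + 1), term m) - ∑ m ∈ Finset.range (n + 1), term m := by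
          rw [h1]; ring
      _ = (-Real.cos y - ∑ m ∈ Finset.range (n + 1), term m)
            - (-Real.cos y - ∑ m ∈ Finset.range ((n + K) + 1), term m) := by ring
  -- bound for the integrals
  set a : ℝ := |Real.sin y| with ha
  have ha1 : a < 1 := by
    rw [ha, abs_lt]
    constructor <;> nlinarith [Real.sin_sq_add_cos_sq y]
  have ha0 : 0 ≤ a := abs_nonneg _
  have hsubI : Set.uIcc (0 : ℝ) y ⊆ Set.Ioo (-(π / 2)) (π / 2) :=
    Set.ordConnected_Ioo.uIcc_subset (by constructor <;> linarith) hymem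
  have hyabs : |y| ≤ π / 2 := le_of_lt (abs_lt.2 ⟨hy, hy'⟩)
  have hbound : ∀ N : ℕ, ‖I N‖ ≤ a ^ (2 * N) * (1 / Real.cos y ^ 2) * |y - 0| := by
    intro N
    rw [hI]
    apply intervalIntegral.norm_integral_le_of_norm_le_const
    intro t htm
    have htm' : t ∈ Set.uIcc (0 : ℝ) y := Set.Ioc_subset_Icc_self htm
    have htI : t ∈ Set.Ioo (-(π / 2)) (π / 2) := hsubI htm'
    have hct : 0 < Real.cos t := Real.cos_pos_of_mem_Ioo htI
    have habs : |t| ≤ |y| := by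
      rcases Set.mem_uIcc.1 htm' with ⟨h1, h2⟩ | ⟨h1, h2⟩
      · rw [abs_of_nonneg h1]; exact le_trans h2 (le_abs_self y)
      · rw [abs_of_nonpos h2]; exact le_trans (neg_le_neg h1) (neg_le_abs y)
    have hcyct : Real.cos y ≤ Real.cos t := by
      rw [← Real.cos_abs t, ← Real.cos_abs y]
      exact Real.cos_le_cos_of_nonneg_of_le_pi (abs_nonneg t) (by linarith) habs
    have hst : |Real.sin t| ≤ a := abs_sin_le_abs_sin hyabs habs
    have h1 : ‖aperyC N * Real.sin t ^ (2 * N + 1) / Real.cos t ^ 2‖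
        = aperyC N * |Real.sin t| ^ (2 * N + 1) / Real.cos t ^ 2 := by
      rw [Real.norm_eq_abs, abs_div, abs_mul, abs_pow, abs_pow, abs_of_nonneg (aperyC_nonneg N),
        abs_of_pos hct]
    rw [h1]
    have h2 : aperyC N * |Real.sin t| ^ (2 * N + 1) / Real.cos t ^ 2
        ≤ 1 * a ^ (2 * N + 1) / Real.cos y ^ 2 := by
      apply div_le_div₀ (by positivity)
      · exact mul_le_mul (aperyC_le_one N) (pow_le_pow_left₀ (abs_nonneg _) hst _)
          (by positivity) (by norm_num)
      · positivity
      · exact pow_le_pow_left₀ (le_of_lt hcy) hcyct 2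
    calc aperyC N * |Real.sin t| ^ (2 * N + 1) / Real.cos t ^ 2
        ≤ 1 * a ^ (2 * N + 1) / Real.cos y ^ 2 := h2
      _ ≤ a ^ (2 * N) * (1 / Real.cos y ^ 2) := by
          rw [one_mul, pow_succ, div_le_iff₀ (by positivity)]
          have h3 : a ^ (2 * N) * a ≤ a ^ (2 * N) * 1 :=
            mul_le_mul_of_nonneg_left (le_of_lt ha1) (by positivity)
          calc a ^ (2 * N) * a ≤ a ^ (2 * N) := by linarith
            _ = a ^ (2 * N) * (1 / Real.cos y ^ 2) * Real.cos y ^ 2 := by field_simp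
  -- cos y * I (n + K) → 0
  have htend : Filter.Tendsto (fun K : ℕ => Real.cos y * I (n + K)) Filter.atTop (nhds 0) := by
    apply squeeze_zero_norm (a := fun K : ℕ =>
      (Real.cos y * (a ^ (2 * n) * (1 / Real.cos y ^ 2) * |y - 0|)) * (a ^ 2) ^ K)
    · intro K
      rw [norm_mul, Real.norm_eq_abs (Real.cos y), abs_of_pos hcy]
      calc Real.cos y * ‖I (n + K)‖
          ≤ Real.cos y * (a ^ (2 * (n + K)) * (1 / Real.cos y ^ 2) * |y - 0|) :=
            mul_le_mul_of_nonneg_left (hbound (n + K)) (le_of_lt hcy)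
        _ = (Real.cos y * (a ^ (2 * n) * (1 / Real.cos y ^ 2) * |y - 0|)) * (a ^ 2) ^ K := by
            rw [show 2 * (n + K) = 2 * n + 2 * K by ring, pow_add, ← pow_mul]
            ring
    · have h2 : (0 : ℝ) ≤ a ^ 2 := by positivity
      have h3 : a ^ 2 < 1 := by nlinarith
      have hC := (tendsto_pow_atTop_nhds_zero_of_lt_one h2 h3).const_mul
        (Real.cos y * (a ^ (2 * n) * (1 / Real.cos y ^ 2) * |y - 0|))
      rw [mul_zero] at hC
      exact hC
  -- partial sums tend to cos y * I n
  have hpartial : Filter.Tendsto (fun K : ℕ => ∑ k ∈ Finset.range K, f k)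
      Filter.atTop (nhds (Real.cos y * I n)) := by
    simp only [hps]
    have := (tendsto_const_nhds
      (x := Real.cos y * I n) (f := Filter.atTop (α := ℕ))).sub htend
    simpa using this
  -- summability
  have hsummable : Summable f := by
    apply Summable.of_nonneg_of_le (f := fun k : ℕ => a ^ (2 * (n + 1)) * (a ^ 2) ^ k)
    · intro k
      rw [hfeq k, hterm]
      have hd : (0 : ℝ) < 2 * ((n + 1 + k : ℕ) : ℝ) - 1 := by
        push_cast
        have : (0:ℝ) ≤ (n:ℝ) := Nat.cast_nonneg n
        have : (0:ℝ) ≤ (k:ℝ) := Nat.cast_nonneg k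
        linarith
      have hsn : (0:ℝ) ≤ Real.sin y ^ (2 * (n + 1 + k)) := by rw [pow_mul]; positivity
      have := aperyC_nonneg (n + 1 + k)
      positivity
    · intro k
      rw [hfeq k, hterm]
      have hd : (1 : ℝ) ≤ 2 * ((n + 1 + k : ℕ) : ℝ) - 1 := by
        push_cast
        have : (0:ℝ) ≤ (n:ℝ) := Nat.cast_nonneg n
        have : (0:ℝ) ≤ (k:ℝ) := Nat.cast_nonneg k
        linarith
      have hsn : (0:ℝ) ≤ Real.sin y ^ (2 * (n + 1 + k)) := by rw [pow_mul]; positivity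
      have hnn : (0:ℝ) ≤ aperyC (n + 1 + k) * Real.sin y ^ (2 * (n + 1 + k)) :=
        mul_nonneg (aperyC_nonneg _) hsn
      have h1 : Real.sin y ^ (2 * (n + 1 + k)) = a ^ (2 * (n + 1)) * (a ^ 2) ^ k := by
        have e : a ^ (2 * (n + 1)) * (a ^ 2) ^ k = a ^ (2 * (n + 1 + k)) := by
          rw [← pow_mul, ← pow_add]
          congr 1
          omega
        rw [e, ha, ← abs_pow, abs_of_nonneg hsn]
      calc aperyC (n + 1 + k) * Real.sin y ^ (2 * (n + 1 + k)) / (2 * ((n + 1 + k : ℕ) : ℝ) - 1)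
          ≤ aperyC (n + 1 + k) * Real.sin y ^ (2 * (n + 1 + k)) / 1 :=
            div_le_div_of_nonneg_left hnn (by norm_num) hd |>.trans_eq rfl
        _ = aperyC (n + 1 + k) * Real.sin y ^ (2 * (n + 1 + k)) := div_one _
        _ ≤ 1 * Real.sin y ^ (2 * (n + 1 + k)) :=
            mul_le_mul_of_nonneg_right (aperyC_le_one _) hsn
        _ = a ^ (2 * (n + 1)) * (a ^ 2) ^ k := by rw [one_mul, h1]
    · have h2 : (0 : ℝ) ≤ a ^ 2 := by positivity
      have h3 : a ^ 2 < 1 := by nlinarith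
      exact (summable_geometric_of_lt_one h2 h3).mul_left _
  have hhs := hsummable.hasSum
  have huniq : (∑' k, f k) = Real.cos y * I n :=
    tendsto_nhds_unique hhs.tendsto_sum_nat hpartial
  rw [hint]
  show HasSum f (Real.cos y * I n)
  rw [← huniq]
  exact hhs
end

section
/- For every integer n ≥ 0 and every real y with −π/2 < y < π/2, ∑_{m=n+1}^∞ (C(2m,m)/4^m)·sin(y)^{2m}/(2m) = ∫_0^y (C(2n,n)/4^n)·sin(t)^{2n}·tan(t) dt − ∫_0^y (1/sin(t))·( ∫_0^t (C(2n,n)/4^n)·sin(u)^{2n}·tan(u)·sec(u) du ) dt, where both integrals exist (the inner-integral expression divided by sin(t) extends continuously to t = 0 with value 0). -/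
open Real MeasureTheory Finset

noncomputable def cc (m : ℕ) : ℝ := (Nat.choose (2*m) m : ℝ) / 4 ^ m

lemma cc_zero : cc 0 = 1 := by simp [cc]

lemma cc_nonneg (m : ℕ) : 0 ≤ cc m := by unfold cc; positivity

lemma ccrec (m : ℕ) : (2*(m:ℝ)+2) * cc (m+1) = (2*m+1) * cc m := by
  have h := Nat.succ_mul_centralBinom_succ m
  have h2 : ((m+1) * Nat.centralBinom (m+1) : ℝ) = (2 * (2*m+1) * Nat.centralBinom m : ℝ) := by
    exact_mod_cast congrArg (Nat.cast (R := ℝ)) h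
  unfold cc
  simp only [Nat.centralBinom] at h2
  have h4 : (4:ℝ)^(m+1) = 4 * 4^m := by ring
  field_simp [h4]
  push_cast at h2 ⊢
  linear_combination (2 * (4:ℝ)^m) * h2

lemma cc_le_one (m : ℕ) : cc m ≤ 1 := by
  induction m with
  | zero => simp [cc_zero]
  | succ k ih =>
    have hr := ccrec k
    have h1 : (0:ℝ) < 2*(k:ℝ)+2 := by positivity
    nlinarith [cc_nonneg k, cc_nonneg (k+1)]


lemma keyId (N : ℕ) (s : ℝ) :
    (1 - s^2) * ∑ m ∈ range (N+1), ((2*m : ℕ) : ℝ) * cc m * s^(2*m-1)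
      = s * ∑ m ∈ range (N+1), cc m * s^(2*m) - (2*(N:ℝ)+1) * cc N * s^(2*N+1) := by
  induction N with
  | zero => simp; ring
  | succ K ih =>
    rw [Finset.sum_range_succ (fun m => ((2*m : ℕ) : ℝ) * cc m * s^(2*m-1)) (K+1),
        Finset.sum_range_succ (fun m => cc m * s^(2*m)) (K+1)]
    have e1 : 2*(K+1) - 1 = 2*K+1 := by omega
    simp only [e1]
    push_cast at ih ⊢
    linear_combination ih + s^(2*K+1) * ccrec K

lemma sumOdd (N : ℕ) (s : ℝ) :
    ∑ m ∈ range (N+1), cc m * s^(2*m) = 1 + s * ∑ m ∈ range N, cc (m+1) * s^(2*m+1) := by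
  have h : ∀ m ∈ range N, cc (m+1) * s^(2*(m+1)) = s * (cc (m+1) * s^(2*m+1)) :=
    fun m _ => by ring
  rw [Finset.sum_range_succ', cc_zero, Finset.sum_congr rfl h, pow_zero, mul_one,
    ← Finset.mul_sum]
  ring


noncomputable def phi (N : ℕ) (t : ℝ) : ℝ :=
  Real.cos t * ∑ m ∈ range (N+1), cc m * Real.sin t ^ (2*m)

noncomputable def gg (N : ℕ) (t : ℝ) : ℝ :=
  Real.sin t / (1 + Real.cos t) - Real.cos t * ∑ m ∈ range N, cc (m+1) * Real.sin t ^ (2*m+1)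

noncomputable def HH (n : ℕ) (t : ℝ) : ℝ :=
  cc n * Real.sin t^(2*n+2) / Real.cos t + phi n t - 1


lemma phi_hasDeriv (N : ℕ) (t : ℝ) :
    HasDerivAt (phi N) (-((2*(N:ℝ)+1) * cc N * Real.sin t^(2*N+1))) t := by
  have hsum : HasDerivAt (fun t => ∑ m ∈ range (N+1), cc m * Real.sin t ^ (2*m))
      (∑ m ∈ range (N+1), cc m * (((2*m : ℕ):ℝ) * Real.sin t^(2*m-1) * Real.cos t)) t :=
    HasDerivAt.fun_sum fun m _ => ((Real.hasDerivAt_sin t).pow (2*m)).const_mul (cc m)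
  have hm := (Real.hasDerivAt_cos t).mul hsum
  convert hm using 1
  case e'_4 => rfl
  case e'_5 => rfl
  case e'_8 => rfl
  have h1 : ∑ m ∈ range (N+1), cc m * (((2*m : ℕ):ℝ) * Real.sin t^(2*m-1) * Real.cos t)
      = (∑ m ∈ range (N+1), ((2*m : ℕ):ℝ) * cc m * Real.sin t^(2*m-1)) * Real.cos t := by
    rw [Finset.sum_mul]; exact Finset.sum_congr rfl fun m _ => by ring
  rw [h1]
  have hk := keyId N (Real.sin t)
  have hcs : Real.cos t ^ 2 = 1 - Real.sin t ^ 2 := Real.cos_sq' t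
  set S' := ∑ m ∈ range (N+1), ((2*m : ℕ):ℝ) * cc m * Real.sin t^(2*m-1) with hS'
  set S := ∑ m ∈ range (N+1), cc m * Real.sin t^(2*m) with hS
  linear_combination -hk - S' * hcs

lemma phi_zero (N : ℕ) : phi N 0 = 1 := by
  rw [phi, sumOdd]; simp

lemma sin_mul_gg (N : ℕ) (t : ℝ) (h1 : 1 + Real.cos t ≠ 0) :
    Real.sin t * gg N t = 1 - phi N t := by
  rw [gg, phi, sumOdd]
  have hs : Real.sin t ^ 2 = 1 - Real.cos t ^ 2 := Real.sin_sq t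
  set S := ∑ m ∈ range N, cc (m+1) * Real.sin t ^ (2*m+1) with hS
  field_simp
  linear_combination hs


lemma HH_hasDeriv (n : ℕ) (t : ℝ) (hc : Real.cos t ≠ 0) :
    HasDerivAt (HH n) (cc n * Real.sin t^(2*n) * Real.tan t * (1/Real.cos t)) t := by
  have h1 : HasDerivAt (fun t => cc n * Real.sin t^(2*n+2))
      (cc n * (((2*n+2 : ℕ):ℝ) * Real.sin t^(2*n+2-1) * Real.cos t)) t :=
    ((Real.hasDerivAt_sin t).pow (2*n+2)).const_mul (cc n)
  have h2 := (h1.div (Real.hasDerivAt_cos t) hc).add (phi_hasDeriv n t)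
  have h3 := h2.sub_const 1
  convert h3 using 1
  case e'_4 => rfl
  case e'_5 => rfl
  case e'_8 => rfl
  have e1 : 2*n+2-1 = 2*n+1 := by omega
  rw [e1, Real.tan_eq_sin_div_cos]
  have hs : Real.sin t ^ 2 = 1 - Real.cos t ^ 2 := Real.sin_sq t
  field_simp
  push_cast
  linear_combination (-(cc n * Real.sin t * Real.sin t^(2*n))) * hs

lemma term_hasDeriv (k : ℕ) (t : ℝ) :
    HasDerivAt (fun t => cc (k+1) * Real.sin t^(2*(k+1)) / (2*((k:ℝ)+1)))
      (cc (k+1) * Real.sin t^(2*k+1) * Real.cos t) t := by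
  have h1 : HasDerivAt (fun t => cc (k+1) * Real.sin t^(2*(k+1)))
      (cc (k+1) * (((2*(k+1) : ℕ):ℝ) * Real.sin t^(2*(k+1)-1) * Real.cos t)) t :=
    ((Real.hasDerivAt_sin t).pow (2*(k+1))).const_mul (cc (k+1))
  have h2 := h1.div_const (2*((k:ℝ)+1))
  convert h2 using 1
  case e'_4 => rfl
  case e'_5 => rfl
  have e1 : 2*(k+1)-1 = 2*k+1 := by omega
  rw [e1]
  have : (2*((k:ℝ))+2) ≠ 0 := by positivity
  push_cast
  field_simp

lemma gg_sub (n K : ℕ) (t : ℝ) :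
    gg n t - gg (n+K) t = ∑ k ∈ range K, cc (n+1+k) * Real.sin t^(2*(n+k)+1) * Real.cos t := by
  have hsum : ∑ k ∈ range K, cc (n+1+k) * Real.sin t^(2*(n+k)+1) * Real.cos t
      = Real.cos t * ∑ x ∈ range K, cc (n+x+1) * Real.sin t ^ (2*(n+x)+1) := by
    rw [Finset.mul_sum]
    refine Finset.sum_congr rfl fun k _ => ?_
    rw [add_right_comm n 1 k]; ring
  rw [gg, gg, Finset.sum_range_add, hsum]
  ring


lemma Hsin (n : ℕ) (t : ℝ) (hc : Real.cos t ≠ 0) (h1 : 1 + Real.cos t ≠ 0) :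
    (1/Real.sin t) * HH n t = cc n * Real.sin t^(2*n) * Real.tan t - gg n t := by
  rcases eq_or_ne (Real.sin t) 0 with hs | hs
  · have htan : Real.tan t = 0 := by rw [Real.tan_eq_sin_div_cos, hs, zero_div]
    have hHH : HH n t = Real.cos t - 1 := by
      rw [HH, phi, hs]
      rw [Finset.sum_range_succ']
      simp [zero_pow, cc]
    have hgg : gg n t = 0 := by
      rw [gg, hs]
      have : ∀ m ∈ range n, cc (m+1) * (0:ℝ) ^ (2*m+1) = 0 := by
        intro m _; simp
      rw [Finset.sum_congr rfl this]
      simp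
    rw [hs, htan, hgg]
    simp
  · have hg := sin_mul_gg n t h1
    rw [Real.tan_eq_sin_div_cos, HH]
    field_simp
    linear_combination (Real.cos t) * hg


lemma gg_zero_of_sin (N : ℕ) (t : ℝ) (hs : Real.sin t = 0) : gg N t = 0 := by
  rw [gg, hs]
  have : ∀ m ∈ range N, cc (m+1) * (0:ℝ) ^ (2*m+1) = 0 := fun m _ => by simp
  rw [Finset.sum_congr rfl this]
  simp

lemma abs_sin_le {a b : ℝ} (hb : |b| ≤ π/2) (ha : a ∈ Set.uIcc 0 b) :
    |Real.sin a| ≤ |Real.sin b| := by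
  have hpi := Real.pi_pos
  rcases le_total 0 b with h | h
  · rw [Set.uIcc_of_le h] at ha
    obtain ⟨ha0, hab⟩ := ha
    have hb2 : b ≤ π/2 := (abs_le.1 hb).2
    have h1 : 0 ≤ Real.sin a := Real.sin_nonneg_of_nonneg_of_le_pi ha0 (by linarith)
    have h2 : 0 ≤ Real.sin b := Real.sin_nonneg_of_nonneg_of_le_pi h (by linarith)
    rw [abs_of_nonneg h1, abs_of_nonneg h2]
    exact Real.sin_le_sin_of_le_of_le_pi_div_two (by linarith) hb2 hab
  · rw [Set.uIcc_of_ge h] at ha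
    obtain ⟨hba, ha0⟩ := ha
    have hb2 : -(π/2) ≤ b := (abs_le.1 hb).1
    have h1 : Real.sin a ≤ 0 := by
      have := Real.sin_nonneg_of_nonneg_of_le_pi (x := -a) (by linarith) (by linarith)
      rw [Real.sin_neg] at this; linarith
    have h2 : Real.sin b ≤ 0 := by
      have := Real.sin_nonneg_of_nonneg_of_le_pi (x := -b) (by linarith) (by linarith)
      rw [Real.sin_neg] at this; linarith
    rw [abs_of_nonpos h1, abs_of_nonpos h2]
    have := Real.sin_le_sin_of_le_of_le_pi_div_two hb2 (by linarith : a ≤ π/2) hba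
    linarith

/-- For every integer `n ≥ 0` and real `y` with `−π/2 < y < π/2`,
`∑_{m=n+1}^∞ (C(2m,m)/4^m)·sin(y)^{2m}/(2m)`
equals
`∫_0^y (C(2n,n)/4^n)·sin(t)^{2n}·tan(t) dt −
 ∫_0^y (1/sin t)·(∫_0^t (C(2n,n)/4^n)·sin(u)^{2n}·tan(u)·sec(u) du) dt`,
where both integrals exist. -/
theorem apery_tail_2m (n : ℕ) (y : ℝ) (hy : -(π / 2) < y) (hy' : y < π / 2) :
    IntervalIntegrable
      (fun t : ℝ => (Nat.choose (2 * n) n : ℝ) / 4 ^ n * Real.sin t ^ (2 * n) * Real.tan t)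
      volume 0 y ∧
    IntervalIntegrable
      (fun t : ℝ => (1 / Real.sin t) *
        ∫ u in (0 : ℝ)..t,
          (Nat.choose (2 * n) n : ℝ) / 4 ^ n * Real.sin u ^ (2 * n) *
            Real.tan u * (1 / Real.cos u))
      volume 0 y ∧
    HasSum
      (fun k : ℕ =>
        (Nat.choose (2 * (n + 1 + k)) (n + 1 + k) : ℝ) / 4 ^ (n + 1 + k) *
          Real.sin y ^ (2 * (n + 1 + k)) / (2 * ((n : ℝ) + 1 + (k : ℝ))))
      ((∫ t in (0 : ℝ)..y,
          (Nat.choose (2 * n) n : ℝ) / 4 ^ n * Real.sin t ^ (2 * n) * Real.tan t) -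
        ∫ t in (0 : ℝ)..y,
          (1 / Real.sin t) *
            ∫ u in (0 : ℝ)..t,
              (Nat.choose (2 * n) n : ℝ) / 4 ^ n * Real.sin u ^ (2 * n) *
                Real.tan u * (1 / Real.cos u)) := by
  have hpi := Real.pi_pos
  have hmem0 : (0:ℝ) ∈ Set.Ioo (-(π/2)) (π/2) := by constructor <;> linarith
  have hmemy : y ∈ Set.Ioo (-(π/2)) (π/2) := ⟨hy, hy'⟩
  have hsub : Set.uIcc 0 y ⊆ Set.Ioo (-(π/2)) (π/2) :=
    Set.ordConnected_Ioo.uIcc_subset hmem0 hmemy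
  have hcos : ∀ t ∈ Set.uIcc 0 y, 0 < Real.cos t := fun t ht =>
    Real.cos_pos_of_mem_Ioo (hsub ht)
  have h1c : ∀ t ∈ Set.uIcc 0 y, (1 : ℝ) + Real.cos t ≠ 0 := fun t ht => by
    have := hcos t ht; positivity
  -- rewrite the choose coefficients as cc
  have hcc : ∀ m : ℕ, (Nat.choose (2*m) m : ℝ) / 4 ^ m = cc m := fun m => rfl
  simp only [hcc]
  -- continuity of the first integrand
  have contf1 : ContinuousOn (fun t : ℝ => cc n * Real.sin t ^ (2*n) * Real.tan t)
      (Set.uIcc 0 y) := by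
    have htan : ContinuousOn Real.tan (Set.uIcc 0 y) :=
      Real.continuousOn_tan.mono (fun t ht => (hcos t ht).ne')
    exact ((continuousOn_const.mul ((Real.continuous_sin.continuousOn).pow _)).mul htan)
  have int1 : IntervalIntegrable (fun t : ℝ => cc n * Real.sin t ^ (2*n) * Real.tan t)
      volume 0 y := contf1.intervalIntegrable
  -- continuity of gg N
  have ggcont : ∀ N, ContinuousOn (gg N) (Set.uIcc 0 y) := by
    intro N
    apply ContinuousOn.sub
    · exact Real.continuous_sin.continuousOn.div
        (continuousOn_const.add Real.continuous_cos.continuousOn) (h1c)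
    · exact Real.continuous_cos.continuousOn.mul
        (continuousOn_finset_sum _ fun m _ => continuousOn_const.mul
          ((Real.continuous_sin.continuousOn).pow _))
  have ggint : ∀ N, IntervalIntegrable (gg N) volume 0 y := fun N =>
    (ggcont N).intervalIntegrable
  -- inner integral equals HH
  have HH0 : HH n 0 = 0 := by
    rw [HH, phi_zero]; simp
  have hI : ∀ t ∈ Set.uIcc 0 y,
      (∫ u in (0:ℝ)..t, cc n * Real.sin u ^ (2*n) * Real.tan u * (1/Real.cos u)) = HH n t := by
    intro t ht
    have hsub2 : Set.uIcc 0 t ⊆ Set.uIcc 0 y :=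
      Set.uIcc_subset_uIcc Set.left_mem_uIcc ht
    have : (∫ u in (0:ℝ)..t, cc n * Real.sin u ^ (2*n) * Real.tan u * (1/Real.cos u))
        = HH n t - HH n 0 := by
      apply intervalIntegral.integral_eq_sub_of_hasDerivAt
      · exact fun u hu => HH_hasDeriv n u (hcos u (hsub2 hu)).ne'
      · apply ContinuousOn.intervalIntegrable
        have htan : ContinuousOn Real.tan (Set.uIcc 0 t) :=
          Real.continuousOn_tan.mono (fun u hu => (hcos u (hsub2 hu)).ne')
        exact ((continuousOn_const.mul ((Real.continuous_sin.continuousOn).pow _)).mul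
          htan).mul (continuousOn_const.div Real.continuous_cos.continuousOn
            (fun u hu => (hcos u (hsub2 hu)).ne'))
      
    rw [this, HH0, sub_zero]
  -- the second integrand equals f1 - gg n on uIcc
  have hEq : Set.EqOn
      (fun t : ℝ => (1 / Real.sin t) *
        ∫ u in (0:ℝ)..t, cc n * Real.sin u ^ (2*n) * Real.tan u * (1/Real.cos u))
      (fun t : ℝ => cc n * Real.sin t ^ (2*n) * Real.tan t - gg n t) (Set.uIcc 0 y) := by
    intro t ht
    simp only
    rw [hI t ht]
    exact Hsin n t (hcos t ht).ne' (h1c t ht)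
  have int2' : IntervalIntegrable
      (fun t : ℝ => cc n * Real.sin t ^ (2*n) * Real.tan t - gg n t) volume 0 y :=
    (contf1.sub (ggcont n)).intervalIntegrable
  have int2 : IntervalIntegrable
      (fun t : ℝ => (1 / Real.sin t) *
        ∫ u in (0:ℝ)..t, cc n * Real.sin u ^ (2*n) * Real.tan u * (1/Real.cos u))
      volume 0 y := by
    apply int2'.congr
    exact fun t ht => (hEq (Set.uIoc_subset_uIcc ht)).symm
  refine ⟨int1, int2, ?_⟩
  -- value of the difference of integrals
  have hBval : (∫ t in (0:ℝ)..y, cc n * Real.sin t ^ (2*n) * Real.tan t) -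
      (∫ t in (0:ℝ)..y, (1 / Real.sin t) *
        ∫ u in (0:ℝ)..t, cc n * Real.sin u ^ (2*n) * Real.tan u * (1/Real.cos u))
      = ∫ t in (0:ℝ)..y, gg n t := by
    rw [intervalIntegral.integral_congr hEq, intervalIntegral.integral_sub int1 (ggint n)]
    ring
  rw [hBval]
  set G := ∫ t in (0:ℝ)..y, gg n t with hG
  have hsc : Real.sin y ^ 2 + Real.cos y ^ 2 = 1 := Real.sin_sq_add_cos_sq y
  have hy2 : Real.sin y ^ 2 < 1 := by nlinarith [hcos y Set.right_mem_uIcc]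
  have hy0 : (0:ℝ) ≤ Real.sin y ^ 2 := sq_nonneg _
  set r := Real.sin y ^ 2 with hr
  set f : ℕ → ℝ := fun k => cc (n+1+k) * Real.sin y ^ (2*(n+1+k)) / (2*((n:ℝ)+1+(k:ℝ)))
    with hf
  have hsinpow : ∀ M : ℕ, Real.sin y ^ (2*M) = r^M := fun M => by
    rw [hr, ← pow_mul, mul_comm]
  have hfnn : ∀ k, 0 ≤ f k := by
    intro k
    rw [hf]
    have h1 := cc_nonneg (n+1+k)
    have h2 : (0:ℝ) ≤ Real.sin y ^ (2*(n+1+k)) := by rw [hsinpow]; positivity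
    positivity
  have hfle : ∀ k, f k ≤ r ^ k := by
    intro k
    rw [hf]
    simp only
    rw [hsinpow]
    have hd : (1:ℝ) ≤ 2*((n:ℝ)+1+(k:ℝ)) := by
      have : (0:ℝ) ≤ (n:ℝ) := Nat.cast_nonneg n
      have : (0:ℝ) ≤ (k:ℝ) := Nat.cast_nonneg k
      linarith
    have h1 := cc_nonneg (n+1+k)
    have h2 := cc_le_one (n+1+k)
    have h3 : (0:ℝ) ≤ r^(n+1+k) := by positivity
    have h4 : r^(n+1+k) ≤ r^k := by
      rw [show n+1+k = k+(n+1) by omega, pow_add]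
      have h5 : r^(n+1) ≤ 1 := pow_le_one₀ hy0 hy2.le
      nlinarith [pow_nonneg hy0 k]
    calc cc (n+1+k) * r^(n+1+k) / (2*((n:ℝ)+1+(k:ℝ)))
        ≤ cc (n+1+k) * r^(n+1+k) / 1 := by
          apply div_le_div_of_nonneg_left _ one_pos hd
          positivity
      _ = cc (n+1+k) * r^(n+1+k) := by ring
      _ ≤ 1 * r^(n+1+k) := by nlinarith
      _ ≤ r^k := by linarith
  have hsummable : Summable f :=
    Summable.of_nonneg_of_le hfnn hfle (summable_geometric_of_lt_one hy0 hy2)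
  -- each term as an integral
  have hterm : ∀ k : ℕ,
      (∫ t in (0:ℝ)..y, cc (n+1+k) * Real.sin t^(2*(n+k)+1) * Real.cos t) = f k := by
    intro k
    have hft := intervalIntegral.integral_eq_sub_of_hasDerivAt
      (f := fun t => cc ((n+k)+1) * Real.sin t^(2*((n+k)+1)) / (2*(((n+k):ℕ):ℝ)+2*1))
      (f' := fun t => cc ((n+k)+1) * Real.sin t^(2*(n+k)+1) * Real.cos t)
      (a := (0:ℝ)) (b := y) ?_ ?_
    · rw [show n+1+k = (n+k)+1 by omega]
      rw [hft, hf]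
      simp only [Real.sin_zero]
      rw [zero_pow (by omega : 2*((n+k)+1) ≠ 0)]
      push_cast
      ring
    · intro t _
      have := term_hasDeriv (n+k) t
      convert this using 2
      case e'_4 => rfl
      case e'_5 => rfl
      push_cast
      ring
    · exact Continuous.intervalIntegrable
        ((continuous_const.mul (Real.continuous_sin.pow _)).mul Real.continuous_cos) _ _
  -- partial sums
  have hS : ∀ K : ℕ, ∑ k ∈ range K, f k = G - ∫ t in (0:ℝ)..y, gg (n+K) t := by
    intro K
    have hci : ∀ k ∈ range K, IntervalIntegrable
        (fun t => cc (n+1+k) * Real.sin t^(2*(n+k)+1) * Real.cos t) volume 0 y :=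
      fun k _ => Continuous.intervalIntegrable
        ((continuous_const.mul (Real.continuous_sin.pow _)).mul Real.continuous_cos) _ _
    calc ∑ k ∈ range K, f k
        = ∑ k ∈ range K, ∫ t in (0:ℝ)..y, cc (n+1+k) * Real.sin t^(2*(n+k)+1) * Real.cos t :=
          (Finset.sum_congr rfl fun k _ => (hterm k).symm)
      _ = ∫ t in (0:ℝ)..y, ∑ k ∈ range K, cc (n+1+k) * Real.sin t^(2*(n+k)+1) * Real.cos t :=
          (intervalIntegral.integral_finset_sum hci).symm
      _ = ∫ t in (0:ℝ)..y, (gg n t - gg (n+K) t) :=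
          intervalIntegral.integral_congr (fun t _ => (gg_sub n K t).symm)
      _ = G - ∫ t in (0:ℝ)..y, gg (n+K) t :=
          intervalIntegral.integral_sub (ggint n) (ggint (n+K))
  -- bound on gg
  have hyabs : |y| ≤ π/2 := by rw [abs_le]; constructor <;> linarith
  have hgb : ∀ N : ℕ, ∀ t ∈ Set.uIcc 0 y, |gg N t| ≤ (2*(N:ℝ)+1) * |y| * r^N := by
    intro N t ht
    have htabs : |t| ≤ π/2 := by
      have h2 := hsub ht
      rw [abs_le]; constructor <;> [linarith [h2.1]; linarith [h2.2]]
    have hty : |t| ≤ |y| := by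
      rcases le_total 0 y with h | h
      · rw [Set.uIcc_of_le h] at ht
        rw [abs_of_nonneg ht.1, abs_of_nonneg h]; exact ht.2
      · rw [Set.uIcc_of_ge h] at ht
        rw [abs_of_nonpos ht.2, abs_of_nonpos h]; linarith [ht.1]
    have hst : |Real.sin t| ≤ |Real.sin y| := abs_sin_le hyabs ht
    rcases eq_or_ne (Real.sin t) 0 with hs | hs
    · rw [gg_zero_of_sin N t hs, abs_zero]
      positivity
    · have hJ : (∫ u in (0:ℝ)..t, -((2*(N:ℝ)+1) * cc N * Real.sin u^(2*N+1)))
          = phi N t - phi N 0 := by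
        apply intervalIntegral.integral_eq_sub_of_hasDerivAt (fun u _ => phi_hasDeriv N u)
        exact Continuous.intervalIntegrable
          ((continuous_const.mul (Real.continuous_sin.pow _)).neg) _ _
      rw [phi_zero] at hJ
      have hJ2 : 1 - phi N t = (2*(N:ℝ)+1) * cc N * ∫ u in (0:ℝ)..t, Real.sin u^(2*N+1) := by
        rw [intervalIntegral.integral_neg, intervalIntegral.integral_const_mul] at hJ
        linarith
      have habs : |∫ u in (0:ℝ)..t, Real.sin u^(2*N+1)| ≤ |Real.sin t|^(2*N+1) * |t - 0| := by
        rw [← Real.norm_eq_abs]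
        apply intervalIntegral.norm_integral_le_of_norm_le_const
        intro u hu
        have hu2 : u ∈ Set.uIcc 0 t := Set.uIoc_subset_uIcc hu
        rw [Real.norm_eq_abs, abs_pow]
        exact pow_le_pow_left₀ (abs_nonneg _) (abs_sin_le htabs hu2) _
      rw [sub_zero] at habs
      have hggt : Real.sin t * gg N t = 1 - phi N t := sin_mul_gg N t (h1c t ht)
      have hccN := cc_nonneg N
      have h6 : |Real.sin t| * |gg N t| ≤ (2*(N:ℝ)+1) * cc N * (|Real.sin t|^(2*N+1) * |t|) := by
        rw [← abs_mul, hggt, hJ2, abs_mul]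
        have h7 : |(2*(N:ℝ)+1) * cc N| = (2*(N:ℝ)+1) * cc N := abs_of_nonneg (by positivity)
        rw [h7]
        exact mul_le_mul_of_nonneg_left habs (by positivity)
      have h8 : |gg N t| * |Real.sin t|
          ≤ ((2*(N:ℝ)+1) * cc N * (|Real.sin t|^(2*N) * |t|)) * |Real.sin t| := by
        calc |gg N t| * |Real.sin t| = |Real.sin t| * |gg N t| := mul_comm _ _
          _ ≤ (2*(N:ℝ)+1) * cc N * (|Real.sin t|^(2*N+1) * |t|) := h6
          _ = ((2*(N:ℝ)+1) * cc N * (|Real.sin t|^(2*N) * |t|)) * |Real.sin t| := by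
              rw [pow_succ]; ring
      have h9 : |gg N t| ≤ (2*(N:ℝ)+1) * cc N * (|Real.sin t|^(2*N) * |t|) :=
        le_of_mul_le_mul_right h8 (abs_pos.2 hs)
      have h10 : |Real.sin t|^(2*N) = (Real.sin t^2)^N := by
        rw [pow_mul, sq_abs]
      have h11 : Real.sin t^2 ≤ r := by
        rw [hr, ← sq_abs (Real.sin t), ← sq_abs (Real.sin y)]
        exact pow_le_pow_left₀ (abs_nonneg _) hst 2
      have hst2 : (0:ℝ) ≤ Real.sin t^2 := sq_nonneg _
      calc |gg N t| ≤ (2*(N:ℝ)+1) * cc N * ((Real.sin t^2)^N * |t|) := by rw [← h10]; exact h9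
        _ ≤ (2*(N:ℝ)+1) * 1 * (r^N * |y|) := by
            gcongr
            exact cc_le_one N
        _ = (2*(N:ℝ)+1) * |y| * r^N := by ring
  -- tendsto of the bound
  have hv : Filter.Tendsto (fun M : ℕ => ((2*(M:ℝ)+1) * |y| * r^M) * |y|)
      Filter.atTop (nhds 0) := by
    have h1 : Summable (fun M : ℕ => (M:ℝ)^1 * r^M) :=
      summable_pow_mul_geometric_of_norm_lt_one 1
        (by rwa [Real.norm_eq_abs, abs_of_nonneg hy0])
    have h2 : Filter.Tendsto (fun M : ℕ => (M:ℝ)^1 * r^M) Filter.atTop (nhds 0) :=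
      h1.tendsto_atTop_zero
    have h3 : Filter.Tendsto (fun M : ℕ => r^M) Filter.atTop (nhds 0) :=
      tendsto_pow_atTop_nhds_zero_of_lt_one hy0 hy2
    have h4 : Filter.Tendsto
        (fun M : ℕ => ((2*((M:ℝ)^1 * r^M) + r^M) * |y|) * |y|) Filter.atTop (nhds 0) := by
      have := (((h2.const_mul 2).add h3).mul_const |y|).mul_const |y|
      simpa using this
    convert h4 using 2 with M
    ring
  have hv2 : Filter.Tendsto (fun K : ℕ => ((2*(((n+K:ℕ)):ℝ)+1) * |y| * r^(n+K)) * |y|)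
      Filter.atTop (nhds 0) := by
    have hcomp : Filter.Tendsto (fun K : ℕ => n+K) Filter.atTop Filter.atTop := by
      simpa [add_comm] using Filter.tendsto_add_atTop_nat n
    exact hv.comp hcomp
  -- partial sums tend to G
  have hSt : Filter.Tendsto (fun K => ∑ k ∈ range K, f k) Filter.atTop (nhds G) := by
    rw [← tendsto_sub_nhds_zero_iff]
    apply squeeze_zero_norm _ hv2
    intro K
    rw [hS K]
    have h1 : G - (∫ t in (0:ℝ)..y, gg (n+K) t) - G = -(∫ t in (0:ℝ)..y, gg (n+K) t) := by
      ring
    rw [h1, norm_neg]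
    have h2 := intervalIntegral.norm_integral_le_of_norm_le_const
      (C := (2*(((n+K:ℕ)):ℝ)+1) * |y| * r^(n+K)) (f := gg (n+K)) (a := (0:ℝ)) (b := y) ?_
    · calc ‖∫ t in (0:ℝ)..y, gg (n+K) t‖
          ≤ ((2*(((n+K:ℕ)):ℝ)+1) * |y| * r^(n+K)) * |y - 0| := h2
        _ = ((2*(((n+K:ℕ)):ℝ)+1) * |y| * r^(n+K)) * |y| := by rw [sub_zero]
    · intro t ht
      rw [Real.norm_eq_abs]
      exact hgb (n+K) t (Set.uIoc_subset_uIcc ht)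
  have hsum0 : HasSum f (∑' k, f k) := hsummable.hasSum
  have hGG : (∑' k, f k) = G := tendsto_nhds_unique hsum0.tendsto_sum_nat hSt
  exact hGG ▸ hsum0
end

section
/- For every integer n ≥ 0 and every real y with −π/2 < y < π/2, sin(y) · ∑_{m=n+1}^∞ (C(2m,m)/4^m)·sin(y)^{2m}/(2m+1) = ∫_0^y (C(2n,n)/4^n)·sin(t)^{2n}·sin(t)·tan(t) dt − ∫_0^y ( ∫_0^t (C(2n,n)/4^n)·sin(u)^{2n}·tan(u)·sec(u) du ) dt. -/
open Real MeasureTheory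


noncomputable def cb (m : ℕ) : ℝ := (Nat.choose (2 * m) m : ℝ) / 4 ^ m

lemma cb_pos (m : ℕ) : 0 < cb m := by
  apply div_pos
  · exact_mod_cast Nat.choose_pos (by omega)
  · positivity

lemma cb_rec (m : ℕ) : (2 * (m : ℝ) + 2) * cb (m + 1) = (2 * m + 1) * cb m := by
  have h := Nat.succ_mul_centralBinom_succ m
  have h' : ((m : ℝ) + 1) * (Nat.choose (2 * (m + 1)) (m + 1) : ℝ)
      = 2 * (2 * m + 1) * (Nat.choose (2 * m) m : ℝ) := by
    exact_mod_cast congrArg (Nat.cast (R := ℝ)) h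
  unfold cb
  have h4 : (4 : ℝ) ^ (m + 1) = 4 * 4 ^ m := by ring
  rw [h4]
  rw [mul_div_assoc', mul_div_assoc', div_eq_div_iff (by positivity) (by positivity)]
  linear_combination (2 * (4 : ℝ) ^ m) * h'

lemma cb_le_one (m : ℕ) : cb m ≤ 1 := by
  induction m with
  | zero => simp [cb]
  | succ k ih =>
    have hrec := cb_rec k
    have hpos := cb_pos (k + 1)
    nlinarith [cb_pos k]

lemma sumLinGeo (A B : ℝ) {r : ℝ} (h0 : 0 ≤ r) (hr : r < 1) :
    Summable (fun k : ℕ => (A * k + B) * r ^ k) := by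
  have h1 : Summable (fun k : ℕ => (k : ℝ) ^ 1 * r ^ k) :=
    summable_pow_mul_geometric_of_norm_lt_one 1 (by rwa [Real.norm_eq_abs, abs_of_nonneg h0])
  simp only [pow_one] at h1
  have h2 : Summable (fun k : ℕ => r ^ k) := summable_geometric_of_lt_one h0 hr
  exact (((h1.mul_left A).add (h2.mul_left B)).congr (fun k => by ring))

lemma tsum_sub_shift {b : ℕ → ℝ} (hb : Summable b) :
    ∑' k, (b k - b (k + 1)) = b 0 := by
  have h1 : Summable (fun k => b (k + 1)) := (summable_nat_add_iff 1).2 hb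
  rw [hb.tsum_sub h1]
  have h2 := hb.tsum_eq_zero_add
  linarith [h2]

lemma abs_sin_le_of_abs_le {t z : ℝ} (h : |t| ≤ z) (hz : z ≤ π / 2) :
    |Real.sin t| ≤ Real.sin z := by
  have hpi := Real.pi_pos
  have ht0 := abs_nonneg t
  have habs : Real.sin |t| ≤ Real.sin z := by
    apply Real.strictMonoOn_sin.monotoneOn ⟨by linarith, by linarith⟩ ⟨by linarith, hz⟩ h
  have h1 : |Real.sin t| = Real.sin |t| := by
    rcases le_or_gt 0 t with h2 | h2
    · rw [abs_of_nonneg h2,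
        abs_of_nonneg (Real.sin_nonneg_of_nonneg_of_le_pi h2 (by
          have := le_abs_self t; linarith))]
    · rw [abs_of_neg h2, Real.sin_neg, abs_of_nonpos]
      apply Real.sin_nonpos_of_nonpos_of_neg_pi_le h2.le
      have := neg_abs_le t; linarith
  rw [h1]; exact habs

lemma integral_sin_pow_mul_cos (m : ℕ) (y : ℝ) :
    ∫ t in (0:ℝ)..y, Real.sin t ^ m * Real.cos t
      = Real.sin y ^ (m + 1) / (m + 1) := by
  have hd : ∀ t ∈ Set.uIcc (0:ℝ) y,
      HasDerivAt (fun z => Real.sin z ^ (m + 1) / (m + 1))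
        (Real.sin t ^ m * Real.cos t) t := by
    intro t _
    have h := ((Real.hasDerivAt_sin t).fun_pow (m + 1)).div_const ((m : ℝ) + 1)
    have hm : ((m : ℝ) + 1) ≠ 0 := by positivity
    refine h.congr_deriv ?_
    push_cast
    field_simp
  rw [intervalIntegral.integral_eq_sub_of_hasDerivAt hd
    ((Continuous.mul (by fun_prop) Real.continuous_cos).intervalIntegrable _ _)]
  simp

lemma integral_telescoped (j : ℕ) (t : ℝ) :
    ∫ u in (0:ℝ)..t,
      ((2 * (j : ℝ) + 2) * Real.sin u ^ (2 * j + 1) * Real.cos u ^ 2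
        - Real.sin u ^ (2 * j + 3))
      = Real.sin t ^ (2 * j + 2) * Real.cos t := by
  have hd : ∀ u ∈ Set.uIcc (0:ℝ) t,
      HasDerivAt (fun z => Real.sin z ^ (2 * j + 2) * Real.cos z)
        ((2 * (j : ℝ) + 2) * Real.sin u ^ (2 * j + 1) * Real.cos u ^ 2
          - Real.sin u ^ (2 * j + 3)) u := by
    intro u _
    have h := ((Real.hasDerivAt_sin u).fun_pow (2 * j + 2)).mul (Real.hasDerivAt_cos u)
    refine h.congr_deriv ?_
    push_cast
    simp
    ring
  rw [intervalIntegral.integral_eq_sub_of_hasDerivAt hd (by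
    apply Continuous.intervalIntegrable; continuity)]
  simp

lemma tsum_setIntegral_swap {f : ℕ → ℝ → ℝ} {a b : ℝ} {M : ℕ → ℝ} (hab : a ≤ b)
    (hc : ∀ i, ContinuousOn (f i) (Set.Icc a b))
    (hb : ∀ i, ∀ t ∈ Set.Icc a b, |f i t| ≤ M i) (hM : Summable M) :
    ∑' i, ∫ t in Set.Ioc a b, f i t = ∫ t in Set.Ioc a b, ∑' i, f i t := by
  have hint : ∀ i, IntegrableOn (f i) (Set.Ioc a b) :=
    fun i => ((hc i).integrableOn_Icc).mono_set Set.Ioc_subset_Icc_self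
  apply MeasureTheory.integral_tsum_of_summable_integral_norm hint
  have hle : ∀ i, ∫ t in Set.Ioc a b, ‖f i t‖ ≤ M i * (b - a) := by
    intro i
    have h1 : ∫ t in Set.Ioc a b, ‖f i t‖ ≤ ∫ _t in Set.Ioc a b, M i := by
      apply MeasureTheory.setIntegral_mono_on (hint i).norm
        (integrableOn_const (by simp [hab]))
        measurableSet_Ioc
      intro t ht
      exact hb i t (Set.Ioc_subset_Icc_self ht)
    have h2 : ∫ _t in Set.Ioc a b, M i = M i * (b - a) := by
      simp [Real.volume_Ioc, ENNReal.toReal_ofReal (by linarith : (0:ℝ) ≤ b - a)]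
      rw [max_eq_left (by linarith)]; ring
    linarith
  apply Summable.of_nonneg_of_le
    (fun i => MeasureTheory.integral_nonneg (fun t => norm_nonneg _)) hle
  exact hM.mul_right _

lemma tsum_intervalIntegral_swap {f : ℕ → ℝ → ℝ} {b : ℝ} {M : ℕ → ℝ}
    (hc : ∀ i, ContinuousOn (f i) (Set.uIcc 0 b))
    (hb : ∀ i, ∀ t ∈ Set.uIcc (0:ℝ) b, |f i t| ≤ M i) (hM : Summable M) :
    ∑' i, ∫ t in (0:ℝ)..b, f i t = ∫ t in (0:ℝ)..b, ∑' i, f i t := by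
  rcases le_total (0:ℝ) b with h | h
  · rw [Set.uIcc_of_le h] at hc hb
    simp_rw [intervalIntegral.integral_of_le h]
    exact tsum_setIntegral_swap h hc hb hM
  · rw [Set.uIcc_of_ge h] at hc hb
    simp_rw [intervalIntegral.integral_of_ge h]
    rw [tsum_neg, tsum_setIntegral_swap h hc hb hM]


/-- For every integer `n ≥ 0` and real `y` with `−π/2 < y < π/2`,
`sin(y) · ∑_{m=n+1}^∞ (C(2m,m)/4^m)·sin(y)^{2m}/(2m+1)`
equals
`∫_0^y (C(2n,n)/4^n)·sin(t)^{2n}·sin(t)·tan(t) dt −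
 ∫_0^y (∫_0^t (C(2n,n)/4^n)·sin(u)^{2n}·tan(u)·sec(u) du) dt`. -/
theorem apery_tail_2m_plus_one (n : ℕ) (y : ℝ) (hy : -(π / 2) < y) (hy' : y < π / 2) :
    Summable
      (fun k : ℕ =>
        (Nat.choose (2 * (n + 1 + k)) (n + 1 + k) : ℝ) / 4 ^ (n + 1 + k) *
          Real.sin y ^ (2 * (n + 1 + k)) / (2 * ((n : ℝ) + 1 + (k : ℝ)) + 1)) ∧
    Real.sin y *
        ∑' k : ℕ,
          (Nat.choose (2 * (n + 1 + k)) (n + 1 + k) : ℝ) / 4 ^ (n + 1 + k) *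
            Real.sin y ^ (2 * (n + 1 + k)) / (2 * ((n : ℝ) + 1 + (k : ℝ)) + 1) =
      (∫ t in (0 : ℝ)..y,
          (Nat.choose (2 * n) n : ℝ) / 4 ^ n * Real.sin t ^ (2 * n) *
            Real.sin t * Real.tan t) -
        ∫ t in (0 : ℝ)..y,
          ∫ u in (0 : ℝ)..t,
            (Nat.choose (2 * n) n : ℝ) / 4 ^ n * Real.sin u ^ (2 * n) *
              Real.tan u * (1 / Real.cos u) := by
  have hpi := Real.pi_pos
  have hy2 : |y| < π / 2 := abs_lt.mpr ⟨by linarith, hy'⟩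
  set s : ℝ := Real.sin |y| with hs_def
  have hs0 : 0 ≤ s := Real.sin_nonneg_of_nonneg_of_le_pi (abs_nonneg y) (by linarith)
  have hs1 : s < 1 := by
    have h := Real.sin_lt_sin_of_lt_of_le_pi_div_two
      (by linarith [abs_nonneg y] : -(π/2) ≤ |y|) le_rfl hy2
    simpa using h
  have hs20 : (0:ℝ) ≤ s ^ 2 := sq_nonneg s
  have hs2 : s ^ 2 < 1 := by nlinarith
  have htabs : ∀ t ∈ Set.uIcc (0:ℝ) y, |t| ≤ |y| := by
    intro t ht
    rcases Set.mem_uIcc.1 ht with ⟨h1, h2⟩ | ⟨h1, h2⟩ <;> rw [abs_le] <;>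
      constructor <;> linarith [le_abs_self y, neg_abs_le y]
  have hsin : ∀ t ∈ Set.uIcc (0:ℝ) y, |Real.sin t| ≤ s :=
    fun t ht => abs_sin_le_of_abs_le (htabs t ht) hy2.le
  have hcos : ∀ t ∈ Set.uIcc (0:ℝ) y, 0 < Real.cos t := by
    intro t ht
    have := htabs t ht
    have h2 := le_abs_self t
    have h3 := neg_abs_le t
    exact Real.cos_pos_of_mem_Ioo ⟨by linarith, by linarith⟩
  have hpow : ∀ t ∈ Set.uIcc (0:ℝ) y, ∀ e k : ℕ, 2*k ≤ e →
      |Real.sin t ^ e| ≤ (s ^ 2) ^ k := by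
    intro t ht e k hk
    rw [abs_pow, ← pow_mul]
    calc |Real.sin t| ^ e ≤ s ^ e := pow_le_pow_left₀ (abs_nonneg _) (hsin t ht) e
      _ ≤ s ^ (2*k) := pow_le_pow_of_le_one hs0 hs1.le hk
  have hcb : ∀ m : ℕ, (Nat.choose (2*m) m : ℝ) / 4 ^ m = cb m := fun m => rfl
  -- Part 1 : summability
  have hsummable : Summable
      (fun k : ℕ =>
        (Nat.choose (2 * (n + 1 + k)) (n + 1 + k) : ℝ) / 4 ^ (n + 1 + k) *
          Real.sin y ^ (2 * (n + 1 + k)) / (2 * ((n : ℝ) + 1 + (k : ℝ)) + 1)) := by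
    simp only [hcb]
    have hymem : y ∈ Set.uIcc (0:ℝ) y := Set.right_mem_uIcc
    apply Summable.of_nonneg_of_le ?_ ?_ (summable_geometric_of_lt_one hs20 hs2)
    · intro k
      have h1 : (0:ℝ) ≤ Real.sin y ^ (2*(n+1+k)) := by rw [pow_mul]; positivity
      have h2 : (0:ℝ) < 2 * ((n : ℝ) + 1 + (k : ℝ)) + 1 := by positivity
      exact div_nonneg (mul_nonneg (cb_pos _).le h1) h2.le
    · intro k
      have h1 : (0:ℝ) ≤ Real.sin y ^ (2*(n+1+k)) := by rw [pow_mul]; positivity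
      have h3 : Real.sin y ^ (2*(n+1+k)) ≤ (s^2)^k := by
        have := hpow y hymem (2*(n+1+k)) k (by omega)
        rwa [abs_of_nonneg h1] at this
      have hD : (1:ℝ) ≤ 2 * ((n : ℝ) + 1 + (k : ℝ)) + 1 := by
        have : (0:ℝ) ≤ (n : ℝ) + 1 + (k : ℝ) := by positivity
        linarith
      calc cb (n+1+k) * Real.sin y ^ (2*(n+1+k)) / (2 * ((n : ℝ) + 1 + (k : ℝ)) + 1)
          ≤ cb (n+1+k) * Real.sin y ^ (2*(n+1+k)) :=
            div_le_self (mul_nonneg (cb_pos _).le h1) hD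
        _ ≤ 1 * Real.sin y ^ (2*(n+1+k)) := by
            apply mul_le_mul_of_nonneg_right (cb_le_one _) h1
        _ ≤ (s^2)^k := by rw [one_mul]; exact h3
  refine ⟨hsummable, ?_⟩
  simp only [hcb]
  -- Step A : pull sin y inside and integrate each term
  have hA : Real.sin y * ∑' k : ℕ,
        cb (n+1+k) * Real.sin y ^ (2*(n+1+k)) / (2 * ((n : ℝ) + 1 + (k : ℝ)) + 1)
      = ∑' k : ℕ, ∫ t in (0:ℝ)..y,
          cb (n+1+k) * (Real.sin t ^ (2*(n+1+k)) * Real.cos t) := by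
    rw [← tsum_mul_left]
    apply tsum_congr; intro k
    rw [intervalIntegral.integral_const_mul, integral_sin_pow_mul_cos]
    push_cast
    ring
  -- Step B : swap sum and outer integral
  have hB : (∑' k : ℕ, ∫ t in (0:ℝ)..y,
        cb (n+1+k) * (Real.sin t ^ (2*(n+1+k)) * Real.cos t))
      = ∫ t in (0:ℝ)..y, ∑' k : ℕ,
          cb (n+1+k) * (Real.sin t ^ (2*(n+1+k)) * Real.cos t) := by
    apply tsum_intervalIntegral_swap (M := fun k => (s^2)^k)
    · intro i; exact Continuous.continuousOn (by fun_prop)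
    · intro i t ht
      have h1 := hpow t ht (2*(n+1+i)) i (by omega)
      have h2 : |Real.cos t| ≤ 1 := Real.abs_cos_le_one t
      have h3 : |cb (n+1+i)| ≤ 1 := by
        rw [abs_of_nonneg (cb_pos _).le]; exact cb_le_one _
      calc |cb (n+1+i) * (Real.sin t ^ (2*(n+1+i)) * Real.cos t)|
          = |cb (n+1+i)| * (|Real.sin t ^ (2*(n+1+i))| * |Real.cos t|) := by
            rw [abs_mul, abs_mul]
        _ ≤ 1 * ((s^2)^i * 1) := by gcongr
        _ = (s^2)^i := by ring
    · exact summable_geometric_of_lt_one hs20 hs2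
  -- Step C : pointwise value of the inner sum
  have hC : ∀ t ∈ Set.uIcc (0:ℝ) y,
      (∑' k : ℕ, cb (n+1+k) * (Real.sin t ^ (2*(n+1+k)) * Real.cos t))
        = ∫ u in (0:ℝ)..t, (2*(n:ℝ)+1) * cb n * Real.sin u ^ (2*n+1) := by
    intro t ht
    have hsub : Set.uIcc (0:ℝ) t ⊆ Set.uIcc 0 y :=
      Set.uIcc_subset_uIcc Set.left_mem_uIcc ht
    have hC1 : ∀ k : ℕ, cb (n+1+k) * (Real.sin t ^ (2*(n+1+k)) * Real.cos t)
        = ∫ u in (0:ℝ)..t, cb (n+1+k) *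
            ((2*((n+k:ℕ):ℝ)+2) * Real.sin u ^ (2*(n+k)+1) * Real.cos u ^ 2
              - Real.sin u ^ (2*(n+k)+3)) := by
      intro k
      rw [intervalIntegral.integral_const_mul, integral_telescoped (n+k) t]
      have he : 2*(n+1+k) = 2*(n+k)+2 := by omega
      rw [he]
    rw [tsum_congr hC1]
    rw [tsum_intervalIntegral_swap
        (M := fun k => (2*((n+k:ℕ):ℝ)+2) * (s^2)^k + (s^2)^k) ?cont ?bnd ?sum]
    case cont => intro i; exact Continuous.continuousOn (by fun_prop)
    case bnd =>
      intro i u hu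
      have humem := hsub hu
      have e1 := hpow u humem (2*(n+i)+1) i (by omega)
      have e2 := hpow u humem (2*(n+i)+3) i (by omega)
      have h3 : |cb (n+1+i)| ≤ 1 := by
        rw [abs_of_nonneg (cb_pos _).le]; exact cb_le_one _
      have h4 : |Real.cos u| ≤ 1 := Real.abs_cos_le_one u
      rw [abs_pow] at e1 e2
      calc |cb (n+1+i) * ((2*((n+i:ℕ):ℝ)+2) * Real.sin u ^ (2*(n+i)+1) * Real.cos u ^ 2
              - Real.sin u ^ (2*(n+i)+3))|
          ≤ 1 * |(2*((n+i:ℕ):ℝ)+2) * Real.sin u ^ (2*(n+i)+1) * Real.cos u ^ 2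
              - Real.sin u ^ (2*(n+i)+3)| := by
            rw [abs_mul]
            exact mul_le_mul_of_nonneg_right h3 (abs_nonneg _)
        _ ≤ |(2*((n+i:ℕ):ℝ)+2) * Real.sin u ^ (2*(n+i)+1) * Real.cos u ^ 2|
              + |Real.sin u ^ (2*(n+i)+3)| := by rw [one_mul]; exact abs_sub _ _
        _ = (2*((n+i:ℕ):ℝ)+2) * |Real.sin u|^(2*(n+i)+1) * |Real.cos u|^2
              + |Real.sin u|^(2*(n+i)+3) := by
            rw [abs_mul, abs_mul, abs_pow, abs_pow, abs_pow,
              abs_of_nonneg (by positivity : (0:ℝ) ≤ 2*((n+i:ℕ):ℝ)+2)]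
        _ ≤ (2*((n+i:ℕ):ℝ)+2) * (s^2)^i * 1^2 + (s^2)^i := by gcongr
        _ = (2*((n+i:ℕ):ℝ)+2) * (s^2)^i + (s^2)^i := by ring
    case sum =>
      have : Summable (fun k : ℕ => (2*((n+k:ℕ):ℝ)+2) * (s^2)^k + (s^2)^k) :=
        (sumLinGeo 2 (2*(n:ℝ)+3) hs20 hs2).congr (fun k => by push_cast; ring)
      exact this
    -- telescope the inner sum pointwise
    apply intervalIntegral.integral_congr
    intro u hu
    dsimp only
    have humem := hsub hu
    have hMsum : Summable (fun j : ℕ => (2*((n+j:ℕ):ℝ)+2) * (s^2)^j) :=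
      (sumLinGeo 2 (2*(n:ℝ)+2) hs20 hs2).congr (fun k => by push_cast; ring)
    have hbsum : Summable (fun j : ℕ =>
        (2*((n+j:ℕ):ℝ)+2) * cb (n+j+1) * Real.sin u ^ (2*(n+j)+1)) := by
      apply Summable.of_norm
      apply Summable.of_nonneg_of_le (fun j => norm_nonneg _) ?_ hMsum
      intro j
      have e1 := hpow u humem (2*(n+j)+1) j (by omega)
      have h3 : |cb (n+j+1)| ≤ 1 := by
        rw [abs_of_nonneg (cb_pos _).le]; exact cb_le_one _
      calc ‖(2*((n+j:ℕ):ℝ)+2) * cb (n+j+1) * Real.sin u ^ (2*(n+j)+1)‖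
          = (2*((n+j:ℕ):ℝ)+2) * |cb (n+j+1)| * |Real.sin u ^ (2*(n+j)+1)| := by
            rw [Real.norm_eq_abs, abs_mul, abs_mul,
              abs_of_nonneg (by positivity : (0:ℝ) ≤ 2*((n+j:ℕ):ℝ)+2)]
        _ ≤ (2*((n+j:ℕ):ℝ)+2) * 1 * (s^2)^j := by gcongr
        _ = (2*((n+j:ℕ):ℝ)+2) * (s^2)^j := by ring
    have hterm : ∀ k : ℕ, cb (n+1+k) *
          ((2*((n+k:ℕ):ℝ)+2) * Real.sin u ^ (2*(n+k)+1) * Real.cos u ^ 2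
            - Real.sin u ^ (2*(n+k)+3))
        = (2*((n+k:ℕ):ℝ)+2) * cb (n+k+1) * Real.sin u ^ (2*(n+k)+1)
          - (2*((n+(k+1):ℕ):ℝ)+2) * cb (n+(k+1)+1) * Real.sin u ^ (2*(n+(k+1))+1) := by
      intro k
      have hrec := cb_rec (n+k+1)
      have hidx : n+1+k = n+k+1 := by omega
      have hidx2 : n+(k+1)+1 = n+k+1+1 := by omega
      have hidx3 : 2*(n+(k+1))+1 = 2*(n+k)+3 := by omega
      rw [hidx, hidx2, hidx3, Real.cos_sq']
      push_cast at hrec ⊢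
      linear_combination (Real.sin u ^ (2*(n+k)+3)) * hrec
    rw [tsum_congr hterm, tsum_sub_shift hbsum]
    have hrec := cb_rec n
    push_cast at hrec ⊢
    linear_combination (Real.sin u ^ (2*n+1)) * hrec
  -- continuity facts
  have hA1cont : ContinuousOn (fun z => cb n * (Real.sin z ^ (2*n+2) / Real.cos z))
      (Set.uIcc (0:ℝ) y) := by
    apply ContinuousOn.mul continuousOn_const
    apply ContinuousOn.div (Continuous.continuousOn (by fun_prop))
      Real.continuous_cos.continuousOn
    exact fun t ht => (hcos t ht).ne'
  have hwcont : Continuous (fun u : ℝ => (2*(n:ℝ)+1) * cb n * Real.sin u ^ (2*n+1)) := by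
    fun_prop
  have hPcont : Continuous (fun t : ℝ =>
      ∫ u in (0:ℝ)..t, (2*(n:ℝ)+1) * cb n * Real.sin u ^ (2*n+1)) :=
    intervalIntegral.continuous_primitive (fun a b => hwcont.intervalIntegrable a b) 0
  -- Step E3 : FTC for the right-hand side
  have hE3 : ∀ t ∈ Set.uIcc (0:ℝ) y,
      (∫ u in (0:ℝ)..t, cb n * (Real.sin u ^ (2*n+1) / Real.cos u ^ 2))
        = cb n * (Real.sin t ^ (2*n+2) / Real.cos t)
          - ∫ u in (0:ℝ)..t, (2*(n:ℝ)+1) * cb n * Real.sin u ^ (2*n+1) := by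
    intro t ht
    have hsub : Set.uIcc (0:ℝ) t ⊆ Set.uIcc 0 y :=
      Set.uIcc_subset_uIcc Set.left_mem_uIcc ht
    have hder : ∀ u ∈ Set.uIcc (0:ℝ) t,
        HasDerivAt (fun z => cb n * (Real.sin z ^ (2*n+2) / Real.cos z))
          (cb n * (Real.sin u ^ (2*n+1) / Real.cos u ^ 2)
            + (2*(n:ℝ)+1) * cb n * Real.sin u ^ (2*n+1)) u := by
      intro u hu
      have hcne : Real.cos u ≠ 0 := (hcos u (hsub hu)).ne'
      have h1 : HasDerivAt (fun z => Real.sin z ^ (2*n+2))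
          (((2*n+2:ℕ):ℝ) * Real.sin u ^ (2*n+1) * Real.cos u) u := by
        have := (Real.hasDerivAt_sin u).fun_pow (2*n+2)
        simpa using this
      have h2 := (h1.div (Real.hasDerivAt_cos u) hcne).const_mul (cb n)
      refine h2.congr_deriv ?_
      have hsc := Real.sin_sq_add_cos_sq u
      field_simp
      push_cast
      linear_combination (cb n * Real.sin u ^ (2*n+1)) * hsc
    have hcont1 : ContinuousOn (fun u => cb n * (Real.sin u ^ (2*n+1) / Real.cos u ^ 2))
        (Set.uIcc (0:ℝ) t) := by
      apply ContinuousOn.mul continuousOn_const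
      apply ContinuousOn.div (Continuous.continuousOn (by fun_prop))
        (Continuous.continuousOn (by fun_prop))
      exact fun u hu => pow_ne_zero _ (hcos u (hsub hu)).ne'
    have hint1 : IntervalIntegrable
        (fun u => cb n * (Real.sin u ^ (2*n+1) / Real.cos u ^ 2)) volume 0 t :=
      hcont1.intervalIntegrable
    have hint2 : IntervalIntegrable
        (fun u => (2*(n:ℝ)+1) * cb n * Real.sin u ^ (2*n+1)) volume 0 t :=
      hwcont.intervalIntegrable _ _
    have hkey := intervalIntegral.integral_eq_sub_of_hasDerivAt hder (hint1.add hint2)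
    rw [intervalIntegral.integral_add hint1 hint2] at hkey
    rw [Real.sin_zero, Real.cos_zero, zero_pow (by omega : 2*n+2 ≠ 0), zero_div,
      mul_zero, sub_zero] at hkey
    linarith [hkey]
  -- rewrite the two integrals on the right-hand side
  have hRHS1 : (∫ t in (0:ℝ)..y, cb n * Real.sin t ^ (2*n) * Real.sin t * Real.tan t)
      = ∫ t in (0:ℝ)..y, cb n * (Real.sin t ^ (2*n+2) / Real.cos t) := by
    apply intervalIntegral.integral_congr
    intro t _
    simp only [Real.tan_eq_sin_div_cos]
    ring
  have hRHS2 : (∫ t in (0:ℝ)..y, ∫ u in (0:ℝ)..t,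
        cb n * Real.sin u ^ (2*n) * Real.tan u * (1 / Real.cos u))
      = ∫ t in (0:ℝ)..y, (cb n * (Real.sin t ^ (2*n+2) / Real.cos t)
          - ∫ u in (0:ℝ)..t, (2*(n:ℝ)+1) * cb n * Real.sin u ^ (2*n+1)) := by
    apply intervalIntegral.integral_congr
    intro t ht
    dsimp only
    have h1 : (∫ u in (0:ℝ)..t, cb n * Real.sin u ^ (2*n) * Real.tan u * (1 / Real.cos u))
        = ∫ u in (0:ℝ)..t, cb n * (Real.sin u ^ (2*n+1) / Real.cos u ^ 2) := by
      apply intervalIntegral.integral_congr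
      intro u _
      simp only [Real.tan_eq_sin_div_cos]
      ring
    rw [h1, hE3 t ht]
  have hsplit : (∫ t in (0:ℝ)..y, (cb n * (Real.sin t ^ (2*n+2) / Real.cos t)
        - ∫ u in (0:ℝ)..t, (2*(n:ℝ)+1) * cb n * Real.sin u ^ (2*n+1)))
      = (∫ t in (0:ℝ)..y, cb n * (Real.sin t ^ (2*n+2) / Real.cos t))
        - ∫ t in (0:ℝ)..y, (∫ u in (0:ℝ)..t, (2*(n:ℝ)+1) * cb n * Real.sin u ^ (2*n+1)) :=
    intervalIntegral.integral_sub hA1cont.intervalIntegrable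
      ((hPcont.continuousOn).intervalIntegrable)
  rw [hA, hB, intervalIntegral.integral_congr (fun t ht => hC t ht), hRHS1, hRHS2, hsplit]
  ring
end

section
/- For every integer n ≥ 0 and every real y with −π/2 < y < π/2, sin(y) · ∑_{m=n}^∞ (C(2m,m)/4^m)·sin(y)^{2m}/(2m+1) = ∫_0^y (C(2n,n)/4^n)·sin(t)^{2n}·sec(t) dt − ∫_0^y ( ∫_0^t (C(2n,n)/4^n)·sin(u)^{2n}·sec(u)·tan(u) du ) dt. -/
open Real MeasureTheory

namespace AperyAux3

noncomputable def c (m : ℕ) : ℝ := (Nat.choose (2*m) m : ℝ) / 4 ^ m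

lemma c_nonneg (m : ℕ) : 0 ≤ c m := by unfold c; positivity

lemma c_le_one (m : ℕ) : c m ≤ 1 := by
  have h : Nat.choose (2*m) m ≤ 4 ^ m :=
    le_trans (Nat.choose_le_choose m (by omega)) (Nat.choose_middle_le_pow m)
  rw [c, div_le_one (by positivity)]
  exact_mod_cast h

lemma c_rec (m : ℕ) : (2*m+1 : ℝ) * c m = (2*m+2) * c (m+1) := by
  have h := Nat.succ_mul_centralBinom_succ m
  have h' : ((m+1 : ℕ) : ℝ) * (Nat.choose (2*(m+1)) (m+1) : ℝ)
      = 2 * (2*m+1) * (Nat.choose (2*m) m : ℝ) := by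
    exact_mod_cast congrArg (fun x : ℕ => (x : ℝ)) h
  rw [c, c]
  have h4 : (4:ℝ) ^ (m+1) = 4 * 4 ^ m := by ring
  field_simp [h4]
  push_cast at h' ⊢
  linear_combination (-2 * (4:ℝ)^m) * h'

end AperyAux3

namespace AperyAux3

noncomputable def T (n : ℕ) (x : ℝ) : ℝ := ∑' k : ℕ, c (n+k) * x ^ (2*(n+k))
noncomputable def U (n : ℕ) (x : ℝ) : ℝ :=
  ∑' k : ℕ, 2 * ((n+k : ℕ) : ℝ) * c (n+k) * x ^ (2*(n+k) - 1)
noncomputable def Sh (n : ℕ) (x : ℝ) : ℝ :=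
  ∑' k : ℕ, c (n+k) * x ^ (2*(n+k)+1) / (2 * ((n+k : ℕ) : ℝ) + 1)

lemma abs_term_le (n k : ℕ) {x : ℝ} (hx : |x| < 1) :
    |c (n+k) * x ^ (2*(n+k))| ≤ |x| ^ k := by
  have h0 : (0:ℝ) ≤ |x| := abs_nonneg x
  rw [abs_mul, abs_pow, abs_of_nonneg (c_nonneg _)]
  calc c (n+k) * |x| ^ (2*(n+k)) ≤ 1 * |x| ^ (2*(n+k)) := by
        gcongr; exact c_le_one _
    _ = |x| ^ (2*(n+k)) := one_mul _
    _ ≤ |x| ^ k := pow_le_pow_of_le_one h0 hx.le (by omega)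

lemma summable_T (n : ℕ) {x : ℝ} (hx : |x| < 1) :
    Summable (fun k : ℕ => c (n+k) * x ^ (2*(n+k))) := by
  refine Summable.of_norm_bounded (summable_geometric_of_lt_one (abs_nonneg x) hx)
    (fun k => ?_)
  rw [Real.norm_eq_abs]; exact abs_term_le n k hx

lemma summable_U (n : ℕ) {x : ℝ} (hx : |x| < 1) :
    Summable (fun k : ℕ => 2 * ((n+k : ℕ) : ℝ) * c (n+k) * x ^ (2*(n+k) - 1)) := by
  have h0 : (0:ℝ) ≤ |x| := abs_nonneg x
  have hs : Summable (fun k : ℕ => (2*(n:ℝ)+2*k) * |x| ^ k) := by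
    have h1 : Summable (fun k : ℕ => (k:ℝ) * |x| ^ k) := by
      simpa using summable_pow_mul_geometric_of_norm_lt_one 1 (by simpa using hx)
    have h2 : Summable (fun k : ℕ => |x| ^ k) := summable_geometric_of_lt_one h0 hx
    have := (h1.mul_left 2).add (h2.mul_left (2*(n:ℝ)))
    refine this.congr (fun k => by ring)
  refine Summable.of_norm_bounded hs (fun k => ?_)
  rw [Real.norm_eq_abs, abs_mul, abs_mul, abs_pow, abs_of_nonneg (c_nonneg _),
    abs_of_nonneg (by positivity : (0:ℝ) ≤ 2 * ((n+k : ℕ) : ℝ))]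
  have hb : |x| ^ (2*(n+k) - 1) ≤ |x| ^ k := pow_le_pow_of_le_one h0 hx.le (by omega)
  calc 2 * ((n+k : ℕ) : ℝ) * c (n+k) * |x| ^ (2*(n+k) - 1)
      ≤ 2 * ((n+k : ℕ) : ℝ) * 1 * |x| ^ k := by
        refine mul_le_mul ?_ hb (by positivity) (by positivity)
        exact mul_le_mul_of_nonneg_left (c_le_one _) (by positivity)
    _ = (2*(n:ℝ)+2*k) * |x| ^ k := by push_cast; ring

lemma hasDerivAt_term (m : ℕ) (x : ℝ) :
    HasDerivAt (fun y : ℝ => c m * y ^ (2*m)) (2 * (m:ℝ) * c m * x ^ (2*m - 1)) x := by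
  have h := (hasDerivAt_pow (2*m) x).const_mul (c m)
  refine h.congr_deriv (Eq.symm ?_)
  push_cast
  ring

lemma hasDerivAt_T (n : ℕ) {x : ℝ} (hx : |x| < 1) : HasDerivAt (T n) (U n x) x := by
  set r : ℝ := (1 + |x|) / 2 with hr
  have hr0 : 0 ≤ r := by positivity
  have hr1 : r < 1 := by simp only [hr]; linarith
  have hxr : |x| < r := by simp only [hr]; linarith
  have habs : |r| < 1 := by rwa [abs_of_nonneg hr0]
  have H := hasDerivAt_tsum_of_isPreconnected
    (𝕜 := ℝ) (F := ℝ)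
    (g := fun (k : ℕ) (y : ℝ) => c (n+k) * y ^ (2*(n+k)))
    (g' := fun (k : ℕ) (y : ℝ) => 2 * ((n+k : ℕ) : ℝ) * c (n+k) * y ^ (2*(n+k) - 1))
    (u := fun k : ℕ => 2 * ((n+k : ℕ) : ℝ) * c (n+k) * r ^ (2*(n+k) - 1))
    (t := Metric.ball (0:ℝ) r) (y₀ := 0) (y := x)
    ?_ (Metric.isOpen_ball) ((convex_ball (0:ℝ) r).isPreconnected) ?_ ?_ ?_ ?_ ?_
  · exact H
  · exact summable_U n habs
  · exact fun k y _ => hasDerivAt_term (n+k) y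
  · intro k y hy
    rw [Metric.mem_ball, dist_zero_right, Real.norm_eq_abs] at hy
    rw [Real.norm_eq_abs, abs_mul, abs_mul, abs_pow, abs_of_nonneg (c_nonneg _),
      abs_of_nonneg (by positivity : (0:ℝ) ≤ 2 * ((n+k : ℕ) : ℝ))]
    have h2 : |y| ^ (2*(n+k) - 1) ≤ r ^ (2*(n+k) - 1) := pow_le_pow_left₀ (abs_nonneg y) hy.le _
    have h3 : (0:ℝ) ≤ 2 * ((n+k : ℕ) : ℝ) * c (n+k) := mul_nonneg (by positivity) (c_nonneg _)
    exact mul_le_mul_of_nonneg_left h2 h3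
  · show (0:ℝ) ∈ Metric.ball (0:ℝ) r
    simp only [Metric.mem_ball, dist_self]
    linarith [abs_nonneg x]
  · exact summable_T n (by simpa using (abs_nonneg x).trans_lt hx)
  · rwa [Metric.mem_ball, dist_zero_right, Real.norm_eq_abs]

lemma hasDerivAt_Sh (n : ℕ) {x : ℝ} (hx : |x| < 1) : HasDerivAt (Sh n) (T n x) x := by
  set r : ℝ := (1 + |x|) / 2 with hr
  have hr0 : 0 ≤ r := by positivity
  have hr1 : r < 1 := by simp only [hr]; linarith
  have hxr : |x| < r := by simp only [hr]; linarith
  have hterm : ∀ (m : ℕ) (y : ℝ),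
      HasDerivAt (fun z : ℝ => c m * z ^ (2*m+1) / (2 * (m:ℝ) + 1)) (c m * y ^ (2*m)) y := by
    intro m y
    have h := ((hasDerivAt_pow (2*m+1) y).const_mul (c m)).div_const (2 * (m:ℝ) + 1)
    have hne : (2 * (m:ℝ) + 1) ≠ 0 := by positivity
    refine h.congr_deriv (Eq.symm ?_)
    rw [Nat.add_sub_cancel]
    push_cast
    field_simp
  have H := hasDerivAt_tsum_of_isPreconnected
    (𝕜 := ℝ) (F := ℝ)
    (g := fun (k : ℕ) (y : ℝ) => c (n+k) * y ^ (2*(n+k)+1) / (2 * ((n+k : ℕ) : ℝ) + 1))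
    (g' := fun (k : ℕ) (y : ℝ) => c (n+k) * y ^ (2*(n+k)))
    (u := fun k : ℕ => r ^ (2*(n+k)))
    (t := Metric.ball (0:ℝ) r) (y₀ := 0) (y := x)
    ?_ (Metric.isOpen_ball) ((convex_ball (0:ℝ) r).isPreconnected) ?_ ?_ ?_ ?_ ?_
  · exact H
  · refine Summable.of_nonneg_of_le (fun k => by positivity) (fun k => ?_)
      (summable_geometric_of_lt_one hr0 hr1)
    exact pow_le_pow_of_le_one hr0 hr1.le (by omega)
  · exact fun k y _ => hterm (n+k) y
  · intro k y hy
    rw [Metric.mem_ball, dist_zero_right, Real.norm_eq_abs] at hy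
    rw [Real.norm_eq_abs, abs_mul, abs_pow, abs_of_nonneg (c_nonneg _)]
    calc c (n+k) * |y| ^ (2*(n+k)) ≤ 1 * r ^ (2*(n+k)) := by
          refine mul_le_mul (c_le_one _) (pow_le_pow_left₀ (abs_nonneg y) hy.le _)
            (by positivity) (by norm_num)
      _ = r ^ (2*(n+k)) := one_mul _
  · show (0:ℝ) ∈ Metric.ball (0:ℝ) r
    simp only [Metric.mem_ball, dist_self]
    linarith [abs_nonneg x]
  · refine Summable.congr (f := fun _ : ℕ => (0:ℝ)) summable_zero (fun k => ?_)
    show (0:ℝ) = c (n+k) * (0:ℝ) ^ (2*(n+k)+1) / (2 * ((n+k : ℕ) : ℝ) + 1)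
    rw [zero_pow (by omega : 2*(n+k)+1 ≠ 0)]
    simp
  · rwa [Metric.mem_ball, dist_zero_right, Real.norm_eq_abs]

end AperyAux3

namespace AperyAux3

open Filter Topology

lemma telescope (n : ℕ) {x : ℝ} (hx : |x| < 1) :
    (1 - x^2) * U n x = x * T n x + 2 * (n:ℝ) * c n * x ^ (2*n - 1) := by
  set g : ℕ → ℝ := fun m => 2 * (m:ℝ) * c m * x ^ (2*m - 1) with hg
  have key : ∀ m : ℕ, (1 - x^2) * (2 * (m:ℝ) * c m * x ^ (2*m-1)) - x * (c m * x ^ (2*m))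
      = g m - g (m+1) := by
    intro m
    match m with
    | 0 =>
      have h := c_rec 0
      simp only [hg]
      norm_num at h ⊢
      linear_combination x * h
    | (j+1) =>
      have h := c_rec (j+1)
      simp only [hg]
      have e1 : 2*(j+1) - 1 = 2*j+1 := by omega
      have e2 : 2*(j+1) = 2*j+2 := by omega
      have e3 : 2*(j+1+1) - 1 = 2*j+3 := by omega
      have e4 : 2*(j+1+1) = 2*j+4 := by omega
      rw [e1, e2, e3]
      push_cast at h ⊢
      linear_combination (-(x:ℝ)^(2*j+3)) * h
  have hU := summable_U n hx
  have hT := summable_T n hx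
  have hUc : Summable (fun k : ℕ =>
      (1-x^2) * (2 * ((n+k:ℕ):ℝ) * c (n+k) * x ^ (2*(n+k)-1))) := hU.mul_left _
  have hTc : Summable (fun k : ℕ => x * (c (n+k) * x ^ (2*(n+k)))) := hT.mul_left _
  have h1 : (1 - x^2) * U n x - x * T n x
      = ∑' k : ℕ, ((1-x^2) * (2 * ((n+k:ℕ):ℝ) * c (n+k) * x ^ (2*(n+k)-1))
          - x * (c (n+k) * x ^ (2*(n+k)))) := by
    rw [Summable.tsum_sub hUc hTc, tsum_mul_left, tsum_mul_left]
    simp only [U, T]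
  have h2 : ∀ k : ℕ, (1-x^2) * (2 * ((n+k:ℕ):ℝ) * c (n+k) * x ^ (2*(n+k)-1))
      - x * (c (n+k) * x ^ (2*(n+k))) = g (n+k) - g (n+k+1) := fun k => key (n+k)
  have hsum2 : Summable (fun k : ℕ => g (n+k) - g (n+k+1)) :=
    (hUc.sub hTc).congr h2
  have hps := hsum2.hasSum.tendsto_sum_nat
  have hform : ∀ K : ℕ, ∑ k ∈ Finset.range K, (g (n+k) - g (n+k+1)) = g n - g (n+K) := by
    intro K
    exact Finset.sum_range_sub' (fun k => g (n+k)) K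
  have h3 : Tendsto (fun K => ∑ k ∈ Finset.range K, (g (n+k) - g (n+k+1)))
      atTop (𝓝 (g n - 0)) := by
    simp only [hform]
    exact tendsto_const_nhds.sub hU.tendsto_atTop_zero
  have hval : (∑' k : ℕ, (g (n+k) - g (n+k+1))) = g n := by
    simpa using tendsto_nhds_unique hps h3
  have hfin : (1 - x^2) * U n x - x * T n x = g n := by
    rw [h1, tsum_congr h2, hval]
  simp only [hg] at hfin
  linarith

lemma T_zero (n : ℕ) : T n 0 = c n * 0 ^ (2*n) := by
  simp only [T]
  rw [tsum_eq_single 0]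
  · simp
  · intro k hk
    rw [zero_pow (by omega : 2*(n+k) ≠ 0), mul_zero]

lemma Sh_zero (n : ℕ) : Sh n 0 = 0 := by
  simp only [Sh]
  rw [tsum_eq_single 0]
  · rw [zero_pow (by omega : 2*(n+0)+1 ≠ 0)]
    simp
  · intro k hk
    rw [zero_pow (by omega : 2*(n+k)+1 ≠ 0)]
    simp

end AperyAux3

namespace AperyAux3

lemma abs_sin_lt_one {t : ℝ} (h : t ∈ Set.Ioo (-(π/2)) (π/2)) : |Real.sin t| < 1 := by
  have hc : 0 < Real.cos t := Real.cos_pos_of_mem_Ioo h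
  have hp := Real.sin_sq_add_cos_sq t
  rw [abs_lt]
  constructor <;> nlinarith

lemma hasDerivAt_P (n : ℕ) {t : ℝ} (h : t ∈ Set.Ioo (-(π/2)) (π/2)) :
    HasDerivAt
      (fun t => c n * Real.sin t ^ (2*n) * (1/Real.cos t) - Real.cos t * T n (Real.sin t))
      (c n * Real.sin t ^ (2*n) * (1/Real.cos t) * Real.tan t) t := by
  have hc : 0 < Real.cos t := Real.cos_pos_of_mem_Ioo h
  have hc' : Real.cos t ≠ 0 := ne_of_gt hc
  have hs : |Real.sin t| < 1 := abs_sin_lt_one h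
  have hsin := Real.hasDerivAt_sin t
  have hcos := Real.hasDerivAt_cos t
  have h1 : HasDerivAt (fun u => Real.sin u ^ (2*n))
      (((2*n : ℕ) : ℝ) * Real.sin t ^ (2*n - 1) * Real.cos t) t := hsin.pow (2*n)
  have h2 : HasDerivAt (fun u => (Real.cos u)⁻¹)
      (-(-Real.sin t) / Real.cos t ^ 2) t := hcos.inv hc'
  have h3 : HasDerivAt (fun u => T n (Real.sin u)) (U n (Real.sin t) * Real.cos t) t :=
    (hasDerivAt_T n hs).comp t hsin
  have hA := (h1.const_mul (c n)).mul h2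
  have hB := hcos.mul h3
  have htot := hA.sub hB
  have tel := telescope n hs
  have hct2 : Real.cos t ^ 2 = 1 - Real.sin t ^ 2 := by
    nlinarith [Real.sin_sq_add_cos_sq t]
  have key : Real.cos t ^ 2 * U n (Real.sin t)
      = Real.sin t * T n (Real.sin t) + 2 * (n:ℝ) * c n * Real.sin t ^ (2*n - 1) := by
    rw [hct2]; exact tel
  simp only [one_div]
  refine htot.congr_deriv (Eq.symm ?_)
  rw [Real.tan_eq_sin_div_cos]
  field_simp
  push_cast
  linear_combination (Real.cos t)^2 * key

end AperyAux3

namespace AperyAux3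

lemma summable_stmt (n : ℕ) {x : ℝ} (hx : |x| < 1) :
    Summable (fun k : ℕ =>
      (Nat.choose (2*(n+k)) (n+k) : ℝ) / 4 ^ (n+k) * x ^ (2*(n+k)) / (2*((n:ℝ)+(k:ℝ))+1)) := by
  refine Summable.of_norm_bounded (summable_geometric_of_lt_one (abs_nonneg x) hx)
    (fun k => ?_)
  rw [Real.norm_eq_abs, abs_div]
  have h1 : |(Nat.choose (2*(n+k)) (n+k) : ℝ) / 4 ^ (n+k) * x ^ (2*(n+k))|
      = |c (n+k) * x ^ (2*(n+k))| := rfl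
  rw [h1]
  refine le_trans (div_le_self (abs_nonneg _) ?_) (abs_term_le n k hx)
  rw [abs_of_nonneg (by positivity)]
  push_cast
  linarith [Nat.cast_nonneg (α := ℝ) n, Nat.cast_nonneg (α := ℝ) k]

end AperyAux3

open AperyAux3 intervalIntegral

/-- For every integer `n ≥ 0` and real `y` with `−π/2 < y < π/2`,
`sin(y) · ∑_{m=n}^∞ (C(2m,m)/4^m)·sin(y)^{2m}/(2m+1)`
equals
`∫_0^y (C(2n,n)/4^n)·sin(t)^{2n}·sec(t) dt −
 ∫_0^y (∫_0^t (C(2n,n)/4^n)·sin(u)^{2n}·sec(u)·tan(u) du) dt`. -/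
theorem apery_tail_2m_plus_one_weak (n : ℕ) (y : ℝ) (hy : -(π / 2) < y) (hy' : y < π / 2) :
    Summable
      (fun k : ℕ =>
        (Nat.choose (2 * (n + k)) (n + k) : ℝ) / 4 ^ (n + k) *
          Real.sin y ^ (2 * (n + k)) / (2 * ((n : ℝ) + (k : ℝ)) + 1)) ∧
    Real.sin y *
        ∑' k : ℕ,
          (Nat.choose (2 * (n + k)) (n + k) : ℝ) / 4 ^ (n + k) *
            Real.sin y ^ (2 * (n + k)) / (2 * ((n : ℝ) + (k : ℝ)) + 1) =
      (∫ t in (0 : ℝ)..y,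
          (Nat.choose (2 * n) n : ℝ) / 4 ^ n * Real.sin t ^ (2 * n) * (1 / Real.cos t)) -
        ∫ t in (0 : ℝ)..y,
          ∫ u in (0 : ℝ)..t,
            (Nat.choose (2 * n) n : ℝ) / 4 ^ n * Real.sin u ^ (2 * n) *
              (1 / Real.cos u) * Real.tan u := by
  have hyI : y ∈ Set.Ioo (-(π/2)) (π/2) := ⟨hy, hy'⟩
  have h0I : (0:ℝ) ∈ Set.Ioo (-(π/2)) (π/2) := by
    constructor <;> [linarith [Real.pi_pos]; linarith [Real.pi_pos]]
  have hsub : Set.uIcc 0 y ⊆ Set.Ioo (-(π/2)) (π/2) :=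
    Set.ordConnected_Ioo.uIcc_subset h0I hyI
  have hxy : |Real.sin y| < 1 := abs_sin_lt_one hyI
  constructor
  · exact summable_stmt n hxy
  -- notation
  rw [show ((Nat.choose (2*n) n : ℝ) / 4 ^ n) = c n from rfl]
  set f : ℝ → ℝ := fun t => c n * Real.sin t ^ (2*n) * (1/Real.cos t) with hf
  set P : ℝ → ℝ := fun t => c n * Real.sin t ^ (2*n) * (1/Real.cos t)
      - Real.cos t * T n (Real.sin t) with hP
  have hcosne : ∀ t ∈ Set.uIcc 0 y, Real.cos t ≠ 0 :=
    fun t ht => ne_of_gt (Real.cos_pos_of_mem_Ioo (hsub ht))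
  -- continuity
  have contf : ContinuousOn f (Set.uIcc 0 y) := by
    refine ContinuousOn.mul (ContinuousOn.mul continuousOn_const
      ((Real.continuous_sin.continuousOn).pow _)) ?_
    exact ContinuousOn.div continuousOn_const Real.continuous_cos.continuousOn hcosne
  have contT : ContinuousOn (fun t => Real.cos t * T n (Real.sin t)) (Set.uIcc 0 y) := by
    refine ContinuousOn.mul Real.continuous_cos.continuousOn ?_
    intro t ht
    have : ContinuousAt (fun t => T n (Real.sin t)) t :=
      ((hasDerivAt_T n (abs_sin_lt_one (hsub ht))).continuousAt).comp
        Real.continuous_sin.continuousAt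
    exact this.continuousWithinAt
  have contP : ContinuousOn P (Set.uIcc 0 y) := contf.sub contT
  have conttan : ContinuousOn (fun u => f u * Real.tan u) (Set.uIcc 0 y) := by
    have : ∀ u, f u * Real.tan u = f u * (Real.sin u / Real.cos u) := by
      intro u; rw [Real.tan_eq_sin_div_cos]
    simp only [this]
    exact contf.mul (ContinuousOn.div Real.continuous_sin.continuousOn
      Real.continuous_cos.continuousOn hcosne)
  -- P 0 = 0
  have hP0 : P 0 = 0 := by
    simp only [hP, Real.sin_zero, Real.cos_zero, T_zero n]
    ring
  -- Step B : inner integral equals P t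
  have stepB : ∀ t ∈ Set.uIcc 0 y, (∫ u in (0:ℝ)..t, f u * Real.tan u) = P t := by
    intro t ht
    have hsubt : Set.uIcc 0 t ⊆ Set.uIcc 0 y :=
      Set.uIcc_subset_uIcc Set.left_mem_uIcc ht
    have := intervalIntegral.integral_eq_sub_of_hasDerivAt
      (f := P) (f' := fun u => f u * Real.tan u) (a := 0) (b := t)
      (fun u hu => hasDerivAt_P n (hsub (hsubt hu)))
      ((conttan.mono hsubt).intervalIntegrable)
    rw [this, hP0, sub_zero]
  -- rewrite second integral
  have step2 : (∫ t in (0:ℝ)..y, ∫ u in (0:ℝ)..t, f u * Real.tan u)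
      = ∫ t in (0:ℝ)..y, P t :=
    intervalIntegral.integral_congr stepB
  -- Step E : Sh formula
  have stepE : (∫ t in (0:ℝ)..y, Real.cos t * T n (Real.sin t)) = Sh n (Real.sin y) := by
    have := intervalIntegral.integral_eq_sub_of_hasDerivAt
      (f := fun t => Sh n (Real.sin t))
      (f' := fun t => Real.cos t * T n (Real.sin t)) (a := 0) (b := y)
      (fun t ht => ?_) (contT.intervalIntegrable)
    · rw [this]
      simp [Sh_zero n]
    · have h := (hasDerivAt_Sh n (abs_sin_lt_one (hsub ht))).comp t (Real.hasDerivAt_sin t)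
      exact h.congr_deriv (mul_comm _ _)
  -- combine RHS
  have hfi : IntervalIntegrable f MeasureTheory.volume 0 y := contf.intervalIntegrable
  have hPi : IntervalIntegrable P MeasureTheory.volume 0 y := contP.intervalIntegrable
  have combine : (∫ t in (0:ℝ)..y, f t) - (∫ t in (0:ℝ)..y, P t)
      = Sh n (Real.sin y) := by
    rw [← intervalIntegral.integral_sub hfi hPi, ← stepE]
    refine intervalIntegral.integral_congr (fun t ht => ?_)
    simp only [hf, hP]
    ring
  -- LHS equals Sh
  have hLHS : Real.sin y * ∑' k : ℕ,
      (Nat.choose (2 * (n + k)) (n + k) : ℝ) / 4 ^ (n + k) *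
        Real.sin y ^ (2 * (n + k)) / (2 * ((n : ℝ) + (k : ℝ)) + 1) = Sh n (Real.sin y) := by
    rw [← tsum_mul_left]
    refine tsum_congr (fun k => ?_)
    show Real.sin y * (c (n+k) * Real.sin y ^ (2*(n+k)) / (2 * ((n:ℝ) + (k:ℝ)) + 1))
      = c (n+k) * Real.sin y ^ (2*(n+k)+1) / (2 * ((n+k : ℕ) : ℝ) + 1)
    rw [pow_succ]
    push_cast
    ring
  rw [hLHS, step2]
  exact combine.symm
end

section
/- For every integer n ≥ 0 and every integer d ≥ 1, the multiple series ∑ (C(2n_1,n_1)/4^{n_1}) · ∏_{j=1}^d 1/(2n_j−1), summed over all integer tuples (n_1,…,n_d) with n_1 > n_2 > ⋯ > n_d > n, converges absolutely and equals C(2n,n)/4^n. -/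
open scoped BigOperators

open Filter Topology

noncomputable def aa (n : ℕ) : ℝ := (Nat.centralBinom n : ℝ) / 4 ^ n

lemma aa_pos (n : ℕ) : 0 < aa n := by
  have := Nat.centralBinom_pos n
  unfold aa
  positivity

lemma aa_succ (n : ℕ) : aa (n + 1) = aa n * (2 * n + 1) / (2 * (n + 1)) := by
  have h := Nat.succ_mul_centralBinom_succ n
  have h' : ((n:ℝ) + 1) * Nat.centralBinom (n + 1) = 2 * (2 * n + 1) * Nat.centralBinom n := by
    exact_mod_cast congrArg (fun x : ℕ => (x : ℝ)) h
  unfold aa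
  have hn : ((n:ℝ) + 1) ≠ 0 := by positivity
  field_simp
  linear_combination (2 * (4:ℝ) ^ n) * h'

lemma aa_sq_le (n : ℕ) : aa n ^ 2 ≤ 1 / (2 * n + 1) := by
  induction n with
  | zero => simp [aa, Nat.centralBinom]
  | succ n ih =>
    rw [aa_succ]
    have h1 : (0:ℝ) < 2 * n + 1 := by positivity
    have key : aa n ^ 2 * (2 * n + 1) ≤ 1 := (le_div_iff₀ h1).mp ih
    rw [div_pow, mul_pow]
    rw [div_le_div_iff₀ (by positivity) (by positivity)]
    push_cast
    nlinarith [key, sq_nonneg (aa n), Nat.cast_nonneg (α := ℝ) n,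
      mul_le_mul_of_nonneg_right key (by positivity : (0:ℝ) ≤ (2 * n + 1) * (2 * n + 3))]

lemma aa_tendsto : Tendsto aa atTop (𝓝 0) := by
  have hle : ∀ n : ℕ, aa n ≤ Real.sqrt (1 / (2 * n + 1)) := by
    intro n
    calc aa n = Real.sqrt (aa n ^ 2) := by rw [Real.sqrt_sq (aa_pos n).le]
      _ ≤ Real.sqrt (1 / (2 * n + 1)) := Real.sqrt_le_sqrt (aa_sq_le n)
  have h1 : Tendsto (fun n : ℕ => 2 * (n:ℝ) + 1) atTop atTop := by
    apply tendsto_atTop_add_const_right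
    exact Tendsto.const_mul_atTop (by norm_num) tendsto_natCast_atTop_atTop
  have h2 : Tendsto (fun n : ℕ => 1 / (2 * (n:ℝ) + 1)) atTop (𝓝 0) := by
    simpa [one_div, Function.comp_def] using tendsto_inv_atTop_zero.comp h1
  have h0 : Tendsto (fun n : ℕ => Real.sqrt (1 / (2 * n + 1))) atTop (𝓝 0) := by
    simpa [Function.comp_def] using (Real.continuous_sqrt.tendsto 0).comp h2
  exact tendsto_of_tendsto_of_tendsto_of_le_of_le tendsto_const_nhds h0
    (fun n => (aa_pos n).le) hle

lemma aa_telescope (n : ℕ) : aa (n + 1) / (2 * ((n:ℝ) + 1) - 1) = aa n - aa (n + 1) := by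
  rw [aa_succ]
  have h1 : (2 * ((n:ℝ) + 1) - 1) ≠ 0 := by
    have : (0:ℝ) ≤ (n:ℝ) := Nat.cast_nonneg n
    intro h; nlinarith
  have h2 : (2 * ((n:ℝ) + 1)) ≠ 0 := by positivity
  field_simp
  ring

def shiftEquiv' (n : ℕ) : ℕ ≃ {m : ℕ // n < m} where
  toFun := fun k => ⟨n + 1 + k, by omega⟩
  invFun := fun m => m.1 - n - 1
  left_inv := fun k => by simp; omega
  right_inv := fun m => by rcases m with ⟨m, hm⟩; exact Subtype.ext (by simp; omega)

/-- Lemma A: telescoping sum. -/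
lemma lemA (n : ℕ) :
    HasSum (fun m : {m : ℕ // n < m} => aa m.1 / (2 * (m.1 : ℝ) - 1)) (aa n) := by
  rw [← (shiftEquiv' n).hasSum_iff]
  have key : HasSum (fun k : ℕ => aa (n + k) - aa (n + k + 1)) (aa n) := by
    have hnn : ∀ k : ℕ, 0 ≤ aa (n + k) - aa (n + k + 1) := by
      intro k
      rw [← aa_telescope (n + k)]
      apply div_nonneg (aa_pos _).le
      have h0 : (0:ℝ) ≤ ((n + k : ℕ):ℝ) := Nat.cast_nonneg _
      linarith
    rw [hasSum_iff_tendsto_nat_of_nonneg hnn]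
    have hps : ∀ N : ℕ, ∑ i ∈ Finset.range N, (aa (n + i) - aa (n + i + 1))
        = aa n - aa (n + N) := fun N => by
      simpa [add_assoc] using Finset.sum_range_sub' (f := fun i => aa (n + i)) N
    simp only [hps]
    have hlim : Tendsto (fun N : ℕ => aa (n + N)) atTop (𝓝 0) :=
      (aa_tendsto.comp (tendsto_add_atTop_nat n)).congr (fun N => by simp [Function.comp, Nat.add_comm])
    simpa using tendsto_const_nhds.sub hlim
  have heq : ((fun m : {m : ℕ // n < m} => aa m.1 / (2 * (m.1 : ℝ) - 1)) ∘ (shiftEquiv' n))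
      = fun k : ℕ => aa (n + k) - aa (n + k + 1) := by
    funext k
    show aa (n + 1 + k) / (2 * ((n + 1 + k : ℕ) : ℝ) - 1) = _
    rw [show n + 1 + k = (n + k) + 1 from by omega]
    have h := aa_telescope (n + k)
    push_cast at h ⊢
    exact h
  rw [heq]
  exact key

def constEquiv (n : ℕ) :
    {m : ℕ // n < m} ≃ {ns : Fin 1 → ℕ // StrictAnti ns ∧ ∀ i, n < ns i} where
  toFun m := ⟨fun _ => m.1,
    ⟨fun i j h => (absurd (Subsingleton.elim i j) h.ne), fun _ => m.2⟩⟩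
  invFun ns := ⟨ns.1 0, ns.2.2 0⟩
  left_inv m := rfl
  right_inv ns := Subtype.ext (funext fun i => by rw [Subsingleton.elim i 0])

def snocFun (d n : ℕ)
    (p : Σ m : {m : ℕ // n < m}, {ns : Fin d → ℕ // StrictAnti ns ∧ ∀ i, m.1 < ns i}) :
    {ns : Fin (d+1) → ℕ // StrictAnti ns ∧ ∀ i, n < ns i} :=
  ⟨Fin.snoc p.2.1 p.1.1, by
    rw [Fin.strictAnti_iff_succ_lt]
    intro i
    rcases Fin.eq_castSucc_or_eq_last i.succ with ⟨j, hj⟩ | hj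
    · rw [hj, Fin.snoc_castSucc, Fin.snoc_castSucc]
      apply p.2.2.1
      have hv : (i : ℕ) + 1 = (j : ℕ) := by
        have := congrArg Fin.val hj
        simpa using this
      exact Fin.lt_def.mpr (by omega)
    · rw [hj, Fin.snoc_last, Fin.snoc_castSucc]
      exact p.2.2.2 i,
   by
    intro i
    induction i using Fin.lastCases with
    | last => rw [Fin.snoc_last]; exact p.1.2
    | cast j => rw [Fin.snoc_castSucc]; exact lt_trans p.1.2 (p.2.2.2 j)⟩

lemma snocFun_bijective (d n : ℕ) : Function.Bijective (snocFun d n) := by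
  constructor
  · rintro ⟨⟨m₁, hm₁⟩, ⟨t₁, ht₁⟩⟩ ⟨⟨m₂, hm₂⟩, ⟨t₂, ht₂⟩⟩ h
    have h' : (Fin.snoc t₁ m₁ : Fin (d+1) → ℕ) = Fin.snoc t₂ m₂ := congrArg Subtype.val h
    have hm : m₁ = m₂ := by
      have := congrFun h' (Fin.last d)
      simpa [Fin.snoc_last] using this
    have ht : t₁ = t₂ := funext fun i => by
      have := congrFun h' (Fin.castSucc i)
      simpa [Fin.snoc_castSucc] using this
    subst hm; subst ht; rfl
  · rintro ⟨ns, h1, h2⟩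
    refine ⟨⟨⟨ns (Fin.last d), h2 _⟩,
      ⟨fun i => ns (Fin.castSucc i),
        ⟨fun i j hij => h1 (Fin.castSucc_lt_castSucc_iff.mpr hij),
         fun i => h1 (Fin.castSucc_lt_last i)⟩⟩⟩, ?_⟩
    exact Subtype.ext (Fin.snoc_init_self ns)

noncomputable def snocEquiv (d n : ℕ) :
    (Σ m : {m : ℕ // n < m}, {ns : Fin d → ℕ // StrictAnti ns ∧ ∀ i, m.1 < ns i}) ≃
      {ns : Fin (d+1) → ℕ // StrictAnti ns ∧ ∀ i, n < ns i} :=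
  Equiv.ofBijective _ (snocFun_bijective d n)

lemma one_div_term_nonneg {n : ℕ} {d : ℕ} (ns : {ns : Fin d → ℕ // StrictAnti ns ∧ ∀ i, n < ns i})
    (i : Fin d) : 0 ≤ 1 / (2 * ((ns.1 i : ℕ) : ℝ) - 1) := by
  have h1 : 1 ≤ ns.1 i := Nat.one_le_iff_ne_zero.mpr (by have := ns.2.2 i; omega)
  have h1' : (1 : ℝ) ≤ (ns.1 i : ℝ) := by exact_mod_cast h1
  apply div_nonneg zero_le_one
  linarith

lemma mainAux : ∀ (d : ℕ) (hd : 0 < d) (n : ℕ),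
    HasSum (fun ns : {ns : Fin d → ℕ // StrictAnti ns ∧ ∀ i, n < ns i} =>
      aa (ns.1 ⟨0, hd⟩) * ∏ i : Fin d, (1 / (2 * (ns.1 i : ℝ) - 1))) (aa n) := by
  intro d
  induction d with
  | zero => exact fun hd => absurd hd (lt_irrefl 0)
  | succ d ih =>
    intro hd n
    rcases Nat.eq_zero_or_pos d with rfl | hd'
    · -- base case d = 1
      rw [← (constEquiv n).hasSum_iff]
      have heq : ((fun ns : {ns : Fin 1 → ℕ // StrictAnti ns ∧ ∀ i, n < ns i} =>
            aa (ns.1 ⟨0, hd⟩) * ∏ i : Fin 1, (1 / (2 * (ns.1 i : ℝ) - 1))) ∘ ⇑(constEquiv n))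
          = fun m : {m : ℕ // n < m} => aa m.1 / (2 * (m.1 : ℝ) - 1) := by
        funext m
        show aa m.1 * ∏ _i : Fin 1, (1 / (2 * (m.1 : ℝ) - 1)) = _
        simp [div_eq_mul_inv]
      rw [heq]
      exact lemA n
    · -- inductive step
      rw [← (snocEquiv d n).hasSum_iff]
      have heq : ((fun ns : {ns : Fin (d+1) → ℕ // StrictAnti ns ∧ ∀ i, n < ns i} =>
            aa (ns.1 ⟨0, hd⟩) * ∏ i : Fin (d+1), (1 / (2 * (ns.1 i : ℝ) - 1))) ∘ ⇑(snocEquiv d n))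
          = fun p : (Σ m : {m : ℕ // n < m},
                {ns : Fin d → ℕ // StrictAnti ns ∧ ∀ i, m.1 < ns i}) =>
              (aa (p.2.1 ⟨0, hd'⟩) * ∏ i : Fin d, (1 / (2 * (p.2.1 i : ℝ) - 1)))
                * (1 / (2 * (p.1.1 : ℝ) - 1)) := by
        funext p
        show aa ((Fin.snoc p.2.1 p.1.1 : Fin (d+1) → ℕ) ⟨0, hd⟩) *
            ∏ i : Fin (d+1), (1 / (2 * (((Fin.snoc p.2.1 p.1.1 : Fin (d+1) → ℕ) i : ℕ) : ℝ) - 1)) = _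
        rw [Fin.prod_univ_castSucc]
        rw [show (⟨0, hd⟩ : Fin (d+1)) = Fin.castSucc ⟨0, hd'⟩ from rfl]
        simp only [Fin.snoc_castSucc, Fin.snoc_last]
        ring
      rw [heq]
      have hfib : ∀ b : {m : ℕ // n < m},
          HasSum (fun t : {ns : Fin d → ℕ // StrictAnti ns ∧ ∀ i, b.1 < ns i} =>
            (aa (t.1 ⟨0, hd'⟩) * ∏ i : Fin d, (1 / (2 * (t.1 i : ℝ) - 1)))
              * (1 / (2 * (b.1 : ℝ) - 1)))
            (aa b.1 / (2 * (b.1 : ℝ) - 1)) := by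
        intro b
        have h := (ih hd' b.1).mul_right (1 / (2 * (b.1 : ℝ) - 1))
        rwa [mul_one_div] at h
      have hnn : ∀ x : (Σ m : {m : ℕ // n < m},
            {ns : Fin d → ℕ // StrictAnti ns ∧ ∀ i, m.1 < ns i}),
          0 ≤ (aa (x.2.1 ⟨0, hd'⟩) * ∏ i : Fin d, (1 / (2 * (x.2.1 i : ℝ) - 1)))
            * (1 / (2 * (x.1.1 : ℝ) - 1)) := by
        rintro ⟨⟨m, hm⟩, t⟩
        have h1 : (1:ℝ) ≤ (m:ℝ) := by exact_mod_cast (by omega : 1 ≤ m)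
        apply mul_nonneg
        · exact mul_nonneg (aa_pos _).le (Finset.prod_nonneg fun i _ => one_div_term_nonneg t i)
        · apply div_nonneg zero_le_one
          linarith
      have hsum : Summable (fun p : (Σ m : {m : ℕ // n < m},
            {ns : Fin d → ℕ // StrictAnti ns ∧ ∀ i, m.1 < ns i}) =>
          (aa (p.2.1 ⟨0, hd'⟩) * ∏ i : Fin d, (1 / (2 * (p.2.1 i : ℝ) - 1)))
            * (1 / (2 * (p.1.1 : ℝ) - 1))) := by
        refine (summable_sigma_of_nonneg hnn).mpr ⟨fun b => (hfib b).summable, ?_⟩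
        refine Summable.congr (lemA n).summable fun b => ?_
        exact ((hfib b).tsum_eq).symm
      exact HasSum.sigma_of_hasSum (lemA n) hfib hsum

/-- For every integer `n ≥ 0` and `d ≥ 1`, the multiple series
`∑ (C(2n₁,n₁)/4^{n₁}) · ∏_{j=1}^d 1/(2n_j−1)` over strictly decreasing tuples
`n₁ > n₂ > ⋯ > n_d > n` converges absolutely and equals `C(2n,n)/4^n`. -/
theorem apery_tail_gamma_ones (n : ℕ) (d : ℕ) (hd : 0 < d) :
    HasSum
      (fun ns : {ns : Fin d → ℕ // StrictAnti ns ∧ ∀ i, n < ns i} =>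
        (Nat.choose (2 * ns.1 ⟨0, hd⟩) (ns.1 ⟨0, hd⟩) : ℝ) / 4 ^ (ns.1 ⟨0, hd⟩) *
          ∏ i : Fin d, (1 / (2 * (ns.1 i : ℝ) - 1)))
      ((Nat.choose (2 * n) n : ℝ) / 4 ^ n) := by
  simpa only [aa, Nat.centralBinom_eq_two_mul_choose] using mainAux d hd n
end
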